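/- arXiv:1604.07260 — 10 statements merged into one kernel-verified Lean document; each statement's English description precedes it below -/
import Mathlib

section
/- Let X = ℓ^p for 1 < p < ∞ with canonical basis, let B ⊂ ℕ be finite with |B| = N, and let m ≤ N. Then D_m(1_B) = D*_m(1_B) = (N - m)^(1/p). -/
open ENNReal

private lemma sub_smul_eq_sum (p : ℝ≥0∞) [Fact (1 ≤ p)] (B A : Finset ℕ) (ε : ℕ → ℝ)
    (t : ℝ) :
    (∑ n ∈ B, lp.single p n (1 : ℝ)) - t • (∑ n ∈ A, ε n • lp.single p n (1 : ℝ)) =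
      ∑ n ∈ B ∪ A, lp.single p n
        ((if n ∈ B then (1:ℝ) else 0) - t * (if n ∈ A then ε n else 0)) := by
  refine lp.ext (funext fun j => ?_)
  simp only [lp.coeFn_sub, lp.coeFn_smul, lp.coeFn_sum, Pi.sub_apply, Pi.smul_apply,
    Finset.sum_apply, lp.single_apply, smul_eq_mul, Finset.mul_sum,
    Finset.sum_dite_eq, mul_dite, mul_one, mul_zero]
  by_cases hjB : j ∈ B <;> by_cases hjA : j ∈ A <;>
    simp [hjB, hjA, Finset.mem_union, Pi.single_apply]

private lemma norm_sub_smul_rpow (p : ℝ≥0∞) [Fact (1 ≤ p)] (hpt : 0 < p.toReal)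
    (B A : Finset ℕ) (ε : ℕ → ℝ) (t : ℝ) :
    ‖(∑ n ∈ B, lp.single p n (1 : ℝ)) - t • (∑ n ∈ A, ε n • lp.single p n (1 : ℝ))‖
        ^ p.toReal =
      ∑ n ∈ B ∪ A,
        |(if n ∈ B then (1:ℝ) else 0) - t * (if n ∈ A then ε n else 0)| ^ p.toReal := by
  rw [sub_smul_eq_sum]
  simpa [Real.norm_eq_abs] using lp.norm_sum_single hpt
    (fun n => (if n ∈ B then (1:ℝ) else 0) - t * (if n ∈ A then ε n else 0)) (B ∪ A)

/-- Lower bound: every point of the span is at distance at least `(N-m)^{1/p}`. -/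
private lemma dist_lower (p : ℝ≥0∞) [Fact (1 ≤ p)] (hpt : 0 < p.toReal)
    (B A : Finset ℕ) (N m : ℕ) (hB : B.card = N) (hA : A.card = m) (hm : m ≤ N)
    (ε : ℕ → ℝ) (t : ℝ) :
    ((N : ℝ) - m) ^ (1 / p.toReal) ≤
      ‖(∑ n ∈ B, lp.single p n (1 : ℝ)) -
        t • (∑ n ∈ A, ε n • lp.single p n (1 : ℝ))‖ := by
  have hNm : (0:ℝ) ≤ (N : ℝ) - m := by
    have := Nat.cast_le (α := ℝ) |>.2 hm; linarith
  have key : ((N : ℝ) - m) ≤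
      ‖(∑ n ∈ B, lp.single p n (1 : ℝ)) -
        t • (∑ n ∈ A, ε n • lp.single p n (1 : ℝ))‖ ^ p.toReal := by
    rw [norm_sub_smul_rpow p hpt]
    have h1 : ((N : ℝ) - m) ≤ ((B \ A).card : ℝ) := by
      have : N - m ≤ (B \ A).card := by
        have := Finset.le_card_sdiff A B
        omega
      calc ((N:ℝ) - m) = ((N - m : ℕ) : ℝ) := by
            rw [Nat.cast_sub hm]
        _ ≤ _ := Nat.cast_le.2 this
    refine h1.trans ?_
    have h2 : ((B \ A).card : ℝ) =
        ∑ n ∈ B \ A,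
          |(if n ∈ B then (1:ℝ) else 0) - t * (if n ∈ A then ε n else 0)| ^ p.toReal := by
      rw [Finset.card_eq_sum_ones, Nat.cast_sum]
      refine Finset.sum_congr rfl fun n hn => ?_
      rcases Finset.mem_sdiff.1 hn with ⟨hnB, hnA⟩
      simp [hnB, hnA]
    rw [h2]
    refine Finset.sum_le_sum_of_subset_of_nonneg ?_ fun n _ _ => ?_
    · exact (Finset.sdiff_subset).trans Finset.subset_union_left
    · exact Real.rpow_nonneg (abs_nonneg _) _
  have hnn : (0:ℝ) ≤ ‖(∑ n ∈ B, lp.single p n (1 : ℝ)) -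
      t • (∑ n ∈ A, ε n • lp.single p n (1 : ℝ))‖ := norm_nonneg _
  calc ((N : ℝ) - m) ^ (1 / p.toReal)
      ≤ (‖(∑ n ∈ B, lp.single p n (1 : ℝ)) -
          t • (∑ n ∈ A, ε n • lp.single p n (1 : ℝ))‖ ^ p.toReal) ^ (1 / p.toReal) :=
        Real.rpow_le_rpow hNm key (by positivity)
    _ = _ := by
        rw [← Real.rpow_mul hnn, mul_one_div, div_self hpt.ne', Real.rpow_one]

/-- For `A ⊆ B`, `|A| = m`, the distance from `1_B` to the span of `1_{εA}` is exactly
`(N-m)^{1/p}`. -/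
private lemma infDist_eq_aux (p : ℝ≥0∞) [Fact (1 ≤ p)] (hpt : 0 < p.toReal)
    (B A : Finset ℕ) (N m : ℕ) (hB : B.card = N) (hA : A.card = m) (hm : m ≤ N)
    (hAB : A ⊆ B) (ε : ℕ → ℝ) (hε : ∀ n ∈ A, ε n = 1) :
    Metric.infDist (∑ n ∈ B, lp.single p n (1 : ℝ))
        (Submodule.span ℝ {(∑ n ∈ A, ε n • lp.single p n (1 : ℝ) :
          lp (fun _ : ℕ => ℝ) p)} : Set (lp (fun _ : ℕ => ℝ) p)) =
      ((N : ℝ) - m) ^ (1 / p.toReal) := by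
  set x := (∑ n ∈ B, lp.single p n (1 : ℝ) : lp (fun _ : ℕ => ℝ) p)
  set v := (∑ n ∈ A, ε n • lp.single p n (1 : ℝ) : lp (fun _ : ℕ => ℝ) p)
  have hne : ((Submodule.span ℝ {v} : Submodule ℝ (lp (fun _ : ℕ => ℝ) p)) :
      Set (lp (fun _ : ℕ => ℝ) p)).Nonempty := ⟨0, (Submodule.span ℝ {v}).zero_mem⟩
  have hlow : ∀ y ∈ ((Submodule.span ℝ {v} : Submodule ℝ (lp (fun _ : ℕ => ℝ) p)) :
      Set (lp (fun _ : ℕ => ℝ) p)), ((N : ℝ) - m) ^ (1 / p.toReal) ≤ dist x y := by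
    intro y hy
    obtain ⟨t, rfl⟩ := Submodule.mem_span_singleton.1 hy
    rw [dist_eq_norm]
    exact dist_lower p hpt B A N m hB hA hm ε t
  have hdist : dist x v = ((N : ℝ) - m) ^ (1 / p.toReal) := by
    rw [dist_eq_norm]
    have h1 : ‖x - v‖ ^ p.toReal = ((N : ℝ) - m) := by
      have := norm_sub_smul_rpow p hpt B A ε 1
      rw [one_smul] at this
      rw [this, Finset.union_eq_left.2 hAB]
      have : ∀ n ∈ B, |(if n ∈ B then (1:ℝ) else 0) -
          1 * (if n ∈ A then ε n else 0)| ^ p.toReal =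
          (if n ∈ A then 0 else 1) := by
        intro n hn
        by_cases hnA : n ∈ A
        · simp [hn, hnA, hε n hnA, Real.zero_rpow hpt.ne']
        · simp [hn, hnA]
      rw [Finset.sum_congr rfl this]
      have h3 : (∑ x ∈ B, if x ∈ A then (0:ℝ) else 1) = ((B \ A).card : ℝ) := by
        rw [Finset.sum_ite, Finset.sum_const, Finset.sum_const, smul_zero, zero_add,
          nsmul_eq_mul, mul_one, ← Finset.sdiff_eq_filter]
      rw [h3, Finset.card_sdiff_of_subset hAB, hB, hA, Nat.cast_sub hm]
    have hnn : (0:ℝ) ≤ ‖x - v‖ := norm_nonneg _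
    have := congrArg (fun z : ℝ => z ^ (1 / p.toReal)) h1
    simpa [← Real.rpow_mul hnn, mul_one_div, div_self hpt.ne', mul_inv_cancel₀ hpt.ne'] using this
  refine le_antisymm ?_ ?_
  · rw [← hdist]
    exact Metric.infDist_le_dist_of_mem (Submodule.mem_span_singleton_self v)
  · by_contra h
    push_neg at h
    obtain ⟨y, hy, hlt⟩ := (Metric.infDist_lt_iff hne).1 h
    exact absurd (hlow y hy) (not_le.2 hlt)

/-- Proposition 2.2, case `m ≤ N`: in `ℓ^p` (`1 < p < ∞`) with the canonical basis,
for `|B| = N` and `m ≤ N`, `D_m(1_B) = D*_m(1_B) = (N-m)^(1/p)`, where `D_m` (resp. `D*_m`)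
is the infimum of the distances from `1_B` to the one-dimensional subspaces `[1_A]`
(resp. `[1_{εA}]`) with `|A| = m`. -/
theorem stmt_2 (p : ℝ≥0∞) [Fact (1 ≤ p)] (hp : 1 < p) (hptop : p ≠ ⊤)
    (B : Finset ℕ) (N m : ℕ) (hB : B.card = N) (hm : m ≤ N) :
    sInf {d : ℝ | ∃ A : Finset ℕ, A.card = m ∧
        d = Metric.infDist (∑ n ∈ B, lp.single p n (1 : ℝ))
          (Submodule.span ℝ {(∑ n ∈ A, lp.single p n (1 : ℝ) :
            lp (fun _ : ℕ => ℝ) p)} : Set (lp (fun _ : ℕ => ℝ) p))} =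
      ((N : ℝ) - m) ^ (1 / p.toReal) ∧
    sInf {d : ℝ | ∃ (A : Finset ℕ) (ε : ℕ → ℝ), A.card = m ∧
        (∀ n ∈ A, ε n = 1 ∨ ε n = -1) ∧
        d = Metric.infDist (∑ n ∈ B, lp.single p n (1 : ℝ))
          (Submodule.span ℝ {(∑ n ∈ A, ε n • lp.single p n (1 : ℝ) :
            lp (fun _ : ℕ => ℝ) p)} : Set (lp (fun _ : ℕ => ℝ) p))} =
      ((N : ℝ) - m) ^ (1 / p.toReal) := by
  have hp0 : p ≠ 0 := (zero_lt_one.trans hp).ne'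
  have hpt : 0 < p.toReal := ENNReal.toReal_pos hp0 hptop
  obtain ⟨A₀, hA₀B, hA₀⟩ := Finset.exists_subset_card_eq (hB ▸ hm)
  constructor
  · refine IsLeast.csInf_eq ⟨⟨A₀, hA₀, ?_⟩, ?_⟩
    · have := infDist_eq_aux p hpt B A₀ N m hB hA₀ hm hA₀B (fun _ => 1) (fun _ _ => rfl)
      simp only [one_smul] at this
      exact this.symm
    · rintro d ⟨A, hA, rfl⟩
      by_contra h
      push_neg at h
      obtain ⟨y, hy, hlt⟩ := (Metric.infDist_lt_iff ⟨0, Submodule.zero_mem _⟩).1 h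
      obtain ⟨t, rfl⟩ := Submodule.mem_span_singleton.1 hy
      have hge := dist_lower p hpt B A N m hB hA hm (fun _ => 1) t
      simp only [one_smul] at hge
      rw [dist_eq_norm] at hlt
      exact absurd hge (not_le.2 hlt)
  · refine IsLeast.csInf_eq ⟨⟨A₀, fun _ => 1, hA₀, fun _ _ => Or.inl rfl, ?_⟩, ?_⟩
    · exact (infDist_eq_aux p hpt B A₀ N m hB hA₀ hm hA₀B (fun _ => 1) (fun _ _ => rfl)).symm
    · rintro d ⟨A, ε, hA, hε, rfl⟩
      by_contra h
      push_neg at h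
      obtain ⟨y, hy, hlt⟩ := (Metric.infDist_lt_iff ⟨0, Submodule.zero_mem _⟩).1 h
      obtain ⟨t, rfl⟩ := Submodule.mem_span_singleton.1 hy
      have hge := dist_lower p hpt B A N m hB hA hm ε t
      rw [dist_eq_norm] at hlt
      exact absurd hge (not_le.2 hlt)
end

section
/- Let X = ℓ^1 with canonical basis and B ⊂ ℕ finite with |B| = N. Then D_m(1_B) = N - m if m ≤ N, D_m(1_B) = m - N if N ≤ m ≤ 2N, and D_m(1_B) = N if m ≥ 2N. -/
open ENNReal

lemma norm_comb (B A : Finset ℕ) (α : ℝ) :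
    ‖(∑ n ∈ B, lp.single 1 n (1 : ℝ)) - α • ∑ n ∈ A, lp.single 1 n (1 : ℝ)‖
    = (B ∩ A).card * |1 - α| + ((B \ A).card : ℝ) + (A \ B).card * |α| := by
  classical
  set f : ℕ → ℝ := fun n => (if n ∈ B then (1:ℝ) else 0) - α * (if n ∈ A then 1 else 0) with hf
  have key : (∑ n ∈ B, lp.single 1 n (1 : ℝ)) - α • ∑ n ∈ A, lp.single 1 n (1 : ℝ)
      = ∑ n ∈ B ∪ A, lp.single 1 n (f n) := by
    refine lp.ext (funext fun j => ?_)
    simp only [lp.coeFn_sub, lp.coeFn_smul, lp.coeFn_sum, Pi.sub_apply, Pi.smul_apply,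
      Finset.sum_apply, lp.single_apply, Finset.sum_dite_eq, smul_eq_mul, hf,
      Finset.mem_union]
    by_cases hb : j ∈ B <;> by_cases ha : j ∈ A <;> simp [hb, ha]
  rw [key]
  have h1 : (0:ℝ) < (1 : ℝ≥0∞).toReal := by norm_num
  have := lp.norm_sum_single (p := 1) h1 f (B ∪ A)
  simp only [ENNReal.toReal_one, Real.rpow_one] at this
  rw [this]
  have hU : B ∪ A = ((B ∩ A) ∪ (B \ A)) ∪ (A \ B) := by
    ext x
    simp only [Finset.mem_union, Finset.mem_inter, Finset.mem_sdiff]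
    tauto
  rw [hU, Finset.sum_union, Finset.sum_union]
  · have e1 : ∀ n ∈ B ∩ A, ‖f n‖ = |1 - α| := by
      intro n hn
      simp only [Finset.mem_inter] at hn
      simp [hf, hn.1, hn.2, Real.norm_eq_abs]
    have e2 : ∀ n ∈ B \ A, ‖f n‖ = 1 := by
      intro n hn
      simp only [Finset.mem_sdiff] at hn
      simp [hf, hn.1, hn.2]
    have e3 : ∀ n ∈ A \ B, ‖f n‖ = |α| := by
      intro n hn
      simp only [Finset.mem_sdiff] at hn
      simp [hf, hn.1, hn.2, Real.norm_eq_abs, abs_neg]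
    rw [Finset.sum_congr rfl e1, Finset.sum_congr rfl e2, Finset.sum_congr rfl e3]
    simp [Finset.sum_const, nsmul_eq_mul]
  · rw [Finset.disjoint_left]
    intro x hx hx'
    simp only [Finset.mem_inter, Finset.mem_sdiff] at hx hx'
    tauto
  · rw [Finset.disjoint_left]
    intro x hx hx'
    simp only [Finset.mem_union, Finset.mem_inter, Finset.mem_sdiff] at hx hx'
    tauto

/-- Remark after Proposition 2.2: in `ℓ¹` with the canonical basis, for `|B| = N`,
`D_m(1_B) = N - m` if `m ≤ N`, `= m - N` if `N ≤ m ≤ 2N`, and `= N` if `m ≥ 2N`,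
where `D_m(x) = inf {‖x - α 1_A‖ : |A| = m, α ∈ ℝ}`. -/
theorem stmt_4 (B : Finset ℕ) (N : ℕ) (hB : B.card = N) (D : ℕ → ℝ)
    (hD : ∀ m : ℕ, D m = sInf {d : ℝ | ∃ (A : Finset ℕ) (α : ℝ), A.card = m ∧
      d = ‖(∑ n ∈ B, lp.single 1 n (1 : ℝ)) -
            α • ∑ n ∈ A, lp.single 1 n (1 : ℝ)‖}) :
    ∀ m : ℕ, (m ≤ N → D m = (N : ℝ) - m) ∧
      (N ≤ m → m ≤ 2 * N → D m = (m : ℝ) - N) ∧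
      (2 * N ≤ m → D m = (N : ℝ)) := by
  intro m
  set S : Set ℝ := {d : ℝ | ∃ (A : Finset ℕ) (α : ℝ), A.card = m ∧
      d = ‖(∑ n ∈ B, lp.single 1 n (1 : ℝ)) - α • ∑ n ∈ A, lp.single 1 n (1 : ℝ)‖} with hS
  have hbdd : BddBelow S := by
    refine ⟨0, ?_⟩
    rintro d ⟨A, α, hA, rfl⟩
    exact norm_nonneg _
  -- generic bound facts for elements of S
  have hgen : ∀ d ∈ S, ∃ k b a : ℝ, ∃ u v : ℝ,
      0 ≤ k ∧ 0 ≤ b ∧ 0 ≤ a ∧ k + b = (N:ℝ) ∧ k + a = (m:ℝ) ∧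
      0 ≤ u ∧ 0 ≤ v ∧ 1 ≤ u + v ∧ u ≤ v + 1 ∧ v ≤ u + 1 ∧
      d = k * u + b + a * v := by
    rintro d ⟨A, α, hA, rfl⟩
    refine ⟨(B ∩ A).card, (B \ A).card, (A \ B).card, |1 - α|, |α|, ?_, ?_, ?_, ?_, ?_, ?_, ?_, ?_, ?_, ?_, ?_⟩
    · positivity
    · positivity
    · positivity
    · have h0 : (B ∩ A).card + (B \ A).card = B.card := Finset.card_inter_add_card_sdiff B A
      rw [hB] at h0
      exact_mod_cast h0
    · have h1 : (A ∩ B).card + (A \ B).card = A.card := Finset.card_inter_add_card_sdiff A B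
      have h2 : (A ∩ B) = (B ∩ A) := Finset.inter_comm A B
      rw [h2] at h1
      rw [← hA, ← h1]
      push_cast
      ring
    · positivity
    · positivity
    · calc (1:ℝ) = |(1 - α) + α| := by norm_num
        _ ≤ |1 - α| + |α| := abs_add_le _ _
    · calc |1 - α| = |1 - α| := rfl
        _ ≤ |α| + 1 := by
            have : (1:ℝ) - α = 1 + (-α) := by ring
            rw [this]
            calc |1 + (-α)| ≤ |(1:ℝ)| + |(-α)| := abs_add_le _ _
              _ = |α| + 1 := by rw [abs_neg, abs_one]; ring
    · calc |α| = |(α - 1) + 1| := by ring_nf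
        _ ≤ |α - 1| + |(1:ℝ)| := abs_add_le _ _
        _ = |1 - α| + 1 := by rw [abs_sub_comm, abs_one]
    · rw [norm_comb]
  refine ⟨?_, ?_, ?_⟩
  · -- m ≤ N
    intro hm
    rw [hD m, ← hS]
    refine le_antisymm ?_ ?_
    · -- csInf ≤ N - m : witness A ⊆ B, card m, α = 1
      obtain ⟨A, hAB, hA⟩ := Finset.exists_subset_card_eq (hB ▸ hm)
      refine csInf_le hbdd ⟨A, 1, hA, ?_⟩
      rw [norm_comb]
      have h1 : B ∩ A = A := Finset.inter_eq_right.mpr hAB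
      have h2 : A \ B = ∅ := Finset.sdiff_eq_empty_iff_subset.mpr hAB
      have h3 : (B \ A).card = N - m := by rw [Finset.card_sdiff_of_subset hAB, hA, hB]
      rw [h1, h2, h3]
      push_cast [Nat.cast_sub hm]
      simp
    · refine le_csInf ?_ ?_
      · obtain ⟨A, hAB, hA⟩ := Finset.exists_subset_card_eq (hB ▸ hm)
        exact ⟨_, A, 1, hA, rfl⟩
      · intro d hd
        obtain ⟨k, b, a, u, v, hk, hb0, ha0, hkb, hka, hu, hv, huv, _, _, rfl⟩ := hgen d hd
        have hkm : k ≤ (m:ℝ) := by linarith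
        nlinarith [mul_nonneg hk hu, mul_nonneg ha0 hv]
  · -- N ≤ m ≤ 2N
    intro hm hm2
    rw [hD m, ← hS]
    refine le_antisymm ?_ ?_
    · obtain ⟨A, hBA, hA⟩ := Infinite.exists_superset_card_eq B m (hB ▸ hm)
      refine csInf_le hbdd ⟨A, 1, hA, ?_⟩
      rw [norm_comb]
      have h1 : B ∩ A = B := Finset.inter_eq_left.mpr hBA
      have h2 : B \ A = ∅ := Finset.sdiff_eq_empty_iff_subset.mpr hBA
      have h3 : (A \ B).card = m - N := by rw [Finset.card_sdiff_of_subset hBA, hA, hB]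
      rw [h1, h2, h3]
      push_cast [Nat.cast_sub hm]
      simp
    · refine le_csInf ?_ ?_
      · obtain ⟨A, hBA, hA⟩ := Infinite.exists_superset_card_eq B m (hB ▸ hm)
        exact ⟨_, A, 1, hA, rfl⟩
      · intro d hd
        obtain ⟨k, b, a, u, v, hk, hb0, ha0, hkb, hka, hu, hv, huv, hu1, hv1, rfl⟩ := hgen d hd
        have hkN : k ≤ (N:ℝ) := by linarith
        have hm2' : (m:ℝ) ≤ 2 * N := by exact_mod_cast hm2
        rcases le_total v 1 with hvle | hvge
        · rcases le_total (2 * k) (m:ℝ) with h2k | h2k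
          · nlinarith [mul_nonneg hk (by linarith : (0:ℝ) ≤ u + v - 1), mul_nonneg (by linarith : (0:ℝ) ≤ (m:ℝ) - 2*k) hv]
          · nlinarith [mul_nonneg hk (by linarith : (0:ℝ) ≤ u + v - 1), mul_nonneg (by linarith : (0:ℝ) ≤ 2*k - (m:ℝ)) (by linarith : (0:ℝ) ≤ 1 - v)]
        · nlinarith [mul_nonneg hk (by linarith : (0:ℝ) ≤ u - v + 1), mul_nonneg ha0 (by linarith : (0:ℝ) ≤ v - 1)]
  · -- 2N ≤ m
    intro hm
    rw [hD m, ← hS]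
    have hNm : N ≤ m := le_trans (by omega) hm
    refine le_antisymm ?_ ?_
    · obtain ⟨A, hBA, hA⟩ := Infinite.exists_superset_card_eq B m (hB ▸ hNm)
      refine csInf_le hbdd ⟨A, 0, hA, ?_⟩
      rw [norm_comb]
      have h1 : B ∩ A = B := Finset.inter_eq_left.mpr hBA
      have h2 : B \ A = ∅ := Finset.sdiff_eq_empty_iff_subset.mpr hBA
      rw [h1, h2]
      simp [hB]
    · refine le_csInf ?_ ?_
      · obtain ⟨A, hBA, hA⟩ := Infinite.exists_superset_card_eq B m (hB ▸ hNm)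
        exact ⟨_, A, 0, hA, rfl⟩
      · intro d hd
        obtain ⟨k, b, a, u, v, hk, hb0, ha0, hkb, hka, hu, hv, huv, _, _, rfl⟩ := hgen d hd
        have hkN : k ≤ (N:ℝ) := by linarith
        have hm' : 2 * (N:ℝ) ≤ m := by exact_mod_cast hm
        nlinarith [mul_nonneg hk (by linarith : (0:ℝ) ≤ u + v - 1), mul_nonneg (by linarith : (0:ℝ) ≤ a - k) hv]
end

section
/- Let H be a Hilbert space with orthonormal basis (e_n) and let x ∈ H be finitely supported with |supp(x)| = N. Then for every m ≥ N, ‖x‖·sqrt(1 − N/m) ≤ D*_m(x) ≤ ‖x‖. -/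
open Finset in
private lemma stmt_8_key {H : Type*} [NormedAddCommGroup H] [InnerProductSpace ℝ H]
    (e : HilbertBasis ℕ ℝ H) (x : H) (S : Finset ℕ) (N : ℕ)
    (hS : ∀ n : ℕ, (inner ℝ x (e n) : ℝ) ≠ 0 ↔ n ∈ S) (hN : S.card = N)
    (m : ℕ) (hm : N ≤ m) (A : Finset ℕ) (ε : ℕ → ℝ) (α : ℝ)
    (hA : A.card = m) (hε : ∀ n ∈ A, ε n = 1 ∨ ε n = -1) :
    ‖x‖ * Real.sqrt (1 - (N : ℝ) / m) ≤ ‖x - α • ∑ n ∈ A, ε n • e n‖ := by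
  rcases Nat.eq_zero_or_pos m with hm0 | hm0
  · subst hm0
    have hA0 : A = ∅ := Finset.card_eq_zero.mp hA
    have hN0 : N = 0 := Nat.le_zero.mp hm
    subst hA0; subst hN0
    simp
  have hmR : (0:ℝ) < m := by exact_mod_cast hm0
  set u : H := ∑ n ∈ A, ε n • e n with hu
  have hεsq : ∀ n ∈ A, ε n * ε n = 1 := by
    intro n hn; rcases hε n hn with h | h <;> rw [h] <;> norm_num
  have hortho := e.orthonormal
  -- ⟪u, u⟫ = m
  have huu : (inner ℝ u u : ℝ) = m := by
    rw [hu, sum_inner]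
    have : ∀ n ∈ A, (inner ℝ (ε n • e n) (∑ k ∈ A, ε k • e k) : ℝ) = 1 := by
      intro n hn
      rw [real_inner_smul_left, inner_sum]
      simp_rw [real_inner_smul_right, orthonormal_iff_ite.mp hortho]
      simp only [mul_ite, mul_one, mul_zero, Finset.sum_ite_eq, hn, if_true]
      exact hεsq n hn
    rw [Finset.sum_congr rfl this]
    simp [hA]
  -- ⟪x, u⟫ = ∑ n ∈ A, ε n * ⟪x, e n⟫
  have hxu : (inner ℝ x u : ℝ) = ∑ n ∈ A, ε n * (inner ℝ x (e n) : ℝ) := by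
    rw [hu, inner_sum]
    simp_rw [real_inner_smul_right]
  -- restrict to A ∩ S
  have hrestr : (inner ℝ x u : ℝ) = ∑ n ∈ A ∩ S, ε n * (inner ℝ x (e n) : ℝ) := by
    rw [hxu]
    refine (Finset.sum_subset (Finset.inter_subset_left) ?_).symm
    intro n hn hn'
    have : n ∉ S := fun hs => hn' (Finset.mem_inter.mpr ⟨hn, hs⟩)
    have hz : (inner ℝ x (e n) : ℝ) = 0 := by
      by_contra h; exact this ((hS n).mp h)
    rw [hz, mul_zero]
  -- Cauchy-Schwarz + Bessel : ⟪x,u⟫² ≤ N * ‖x‖²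
  have hcs : (inner ℝ x u : ℝ) ^ 2 ≤ (N : ℝ) * ‖x‖ ^ 2 := by
    rw [hrestr]
    calc (∑ n ∈ A ∩ S, ε n * (inner ℝ x (e n) : ℝ)) ^ 2
        ≤ (∑ n ∈ A ∩ S, (ε n) ^ 2) * ∑ n ∈ A ∩ S, (inner ℝ x (e n) : ℝ) ^ 2 :=
          Finset.sum_mul_sq_le_sq_mul_sq _ _ _
      _ ≤ (N : ℝ) * ‖x‖ ^ 2 := by
          have h1 : (∑ n ∈ A ∩ S, (ε n) ^ 2) = ((A ∩ S).card : ℝ) := by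
            rw [Finset.sum_congr rfl (g := fun _ => (1:ℝ)) (fun n hn => by
              rw [sq, hεsq n (Finset.mem_of_mem_inter_left hn)]),
              Finset.sum_const, nsmul_eq_mul, mul_one]
          have h2 : ((A ∩ S).card : ℝ) ≤ (N : ℝ) := by
            exact_mod_cast hN ▸ Finset.card_le_card (Finset.inter_subset_right)
          have h3 : ∑ n ∈ A ∩ S, (inner ℝ x (e n) : ℝ) ^ 2 ≤ ‖x‖ ^ 2 := by
            have := hortho.sum_inner_products_le (s := A ∩ S) x
            calc ∑ n ∈ A ∩ S, (inner ℝ x (e n) : ℝ) ^ 2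
                = ∑ n ∈ A ∩ S, ‖(inner ℝ (e n) x : ℝ)‖ ^ 2 := by
                  refine Finset.sum_congr rfl fun n _ => ?_
                  rw [real_inner_comm, Real.norm_eq_abs, sq_abs]
              _ ≤ ‖x‖ ^ 2 := this
          have h4 : (0:ℝ) ≤ ∑ n ∈ A ∩ S, (inner ℝ x (e n) : ℝ) ^ 2 :=
            Finset.sum_nonneg fun n _ => sq_nonneg _
          nlinarith [sq_nonneg (‖x‖)]
  -- expansion of the norm
  set c : ℝ := (inner ℝ x u : ℝ)
  have hexp : ‖x - α • u‖ ^ 2 = ‖x‖ ^ 2 - 2 * α * c + α ^ 2 * m := by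
    rw [norm_sub_sq_real, real_inner_smul_right, norm_smul]
    have : ‖u‖ ^ 2 = (m : ℝ) := by rw [← real_inner_self_eq_norm_sq]; exact huu
    rw [mul_pow, this, Real.norm_eq_abs, sq_abs]
    ring
  have hkey : ‖x‖ ^ 2 * (1 - (N : ℝ) / m) ≤ ‖x - α • u‖ ^ 2 := by
    rw [hexp]
    have hdiv : ‖x‖ ^ 2 * (1 - (N : ℝ) / m) = (‖x‖ ^ 2 * ((m : ℝ) - N)) / m := by
      field_simp
    rw [hdiv, div_le_iff₀ hmR]
    nlinarith [sq_nonneg (α * (m : ℝ) - c), hcs]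
  calc ‖x‖ * Real.sqrt (1 - (N : ℝ) / m)
      = Real.sqrt (‖x‖ ^ 2 * (1 - (N : ℝ) / m)) := by
        rw [Real.sqrt_mul (sq_nonneg _), Real.sqrt_sq (norm_nonneg _)]
    _ ≤ Real.sqrt (‖x - α • u‖ ^ 2) := Real.sqrt_le_sqrt hkey
    _ = ‖x - α • u‖ := Real.sqrt_sq (norm_nonneg _)

/-- In a Hilbert space with orthonormal basis `(e_n)`, if `x` is finitely supported with
`|supp(x)| = N`, then for every `m ≥ N`, `‖x‖ sqrt(1 - N/m) ≤ D*_m(x) ≤ ‖x‖`. -/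
theorem stmt_8 {H : Type*} [NormedAddCommGroup H] [InnerProductSpace ℝ H] [CompleteSpace H]
    (e : HilbertBasis ℕ ℝ H) (x : H) (S : Finset ℕ) (N : ℕ)
    (hS : ∀ n : ℕ, (inner ℝ x (e n) : ℝ) ≠ 0 ↔ n ∈ S) (hN : S.card = N)
    (m : ℕ) (hm : N ≤ m) (Dstar : ℝ)
    (hD : Dstar = sInf {d : ℝ | ∃ (A : Finset ℕ) (ε : ℕ → ℝ) (α : ℝ), A.card = m ∧
      (∀ n ∈ A, ε n = 1 ∨ ε n = -1) ∧ d = ‖x - α • ∑ n ∈ A, ε n • e n‖}) :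
    ‖x‖ * Real.sqrt (1 - (N : ℝ) / m) ≤ Dstar ∧ Dstar ≤ ‖x‖ := by
  set T := {d : ℝ | ∃ (A : Finset ℕ) (ε : ℕ → ℝ) (α : ℝ), A.card = m ∧
      (∀ n ∈ A, ε n = 1 ∨ ε n = -1) ∧ d = ‖x - α • ∑ n ∈ A, ε n • e n‖} with hT
  have hmem : ‖x‖ ∈ T := by
    refine ⟨Finset.range m, fun _ => 1, 0, Finset.card_range m, fun _ _ => Or.inl rfl, ?_⟩
    simp
  have hne : T.Nonempty := ⟨‖x‖, hmem⟩
  have hbdd : BddBelow T := by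
    refine ⟨0, ?_⟩
    rintro d ⟨A, ε, α, _, _, rfl⟩
    exact norm_nonneg _
  constructor
  · rw [hD]
    refine le_csInf hne ?_
    rintro d ⟨A, ε, α, hA, hε, rfl⟩
    exact stmt_8_key e x S N hS hN m hm A ε α hA hε
  · rw [hD]
    exact csInf_le hbdd hmem
end

section
/- Let (e_n) be a Schauder basis of a Banach space X, x ∈ X, and A a finite subset of ℕ. Then sup_{B ⊆ A} ‖x + 1_B‖ ≤ sup{ ‖x + 1_{εA}‖ : ε ∈ {±1}^A } ≤ 3 · sup_{B ⊆ A} ‖x + 1_B‖. -/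
/-- Lemma 3.3, second part: for a basis `(e_n)` of `X`, `x ∈ X` and `A` finite,
`sup_{B ⊆ A} ‖x + 1_B‖ ≤ sup {‖x + 1_{εA}‖ : ε ∈ {±1}^A} ≤ 3 sup_{B ⊆ A} ‖x + 1_B‖`. -/
theorem stmt_12 {X : Type*} [NormedAddCommGroup X] [NormedSpace ℝ X]
    (e : ℕ → X) (x : X) (A : Finset ℕ) :
    sSup {v : ℝ | ∃ B : Finset ℕ, B ⊆ A ∧ v = ‖x + ∑ n ∈ B, e n‖} ≤
        sSup {v : ℝ | ∃ ε : ℕ → ℝ, (∀ n ∈ A, ε n = 1 ∨ ε n = -1) ∧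
          v = ‖x + ∑ n ∈ A, ε n • e n‖} ∧
      sSup {v : ℝ | ∃ ε : ℕ → ℝ, (∀ n ∈ A, ε n = 1 ∨ ε n = -1) ∧
          v = ‖x + ∑ n ∈ A, ε n • e n‖} ≤
        3 * sSup {v : ℝ | ∃ B : Finset ℕ, B ⊆ A ∧ v = ‖x + ∑ n ∈ B, e n‖} := by
  set S1 : Set ℝ := {v : ℝ | ∃ B : Finset ℕ, B ⊆ A ∧ v = ‖x + ∑ n ∈ B, e n‖} with hS1
  set S2 : Set ℝ := {v : ℝ | ∃ ε : ℕ → ℝ, (∀ n ∈ A, ε n = 1 ∨ ε n = -1) ∧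
          v = ‖x + ∑ n ∈ A, ε n • e n‖} with hS2
  have hS1ne : S1.Nonempty := ⟨‖x + ∑ n ∈ (∅ : Finset ℕ), e n‖, ∅, by simp, rfl⟩
  have hS2ne : S2.Nonempty :=
    ⟨‖x + ∑ n ∈ A, (1 : ℝ) • e n‖, fun _ => 1, fun _ _ => Or.inl rfl, rfl⟩
  have hS1bdd : BddAbove S1 := by
    have : S1 ⊆ ↑(A.powerset.image fun B => ‖x + ∑ n ∈ B, e n‖) := by
      rintro v ⟨B, hB, rfl⟩
      simp only [Finset.coe_image, Set.mem_image, Finset.mem_coe, Finset.mem_powerset]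
      exact ⟨B, hB, rfl⟩
    exact (Finset.bddAbove _).mono this
  -- key: every element of S2 is ≤ 3 * sSup S1
  have key : ∀ v ∈ S2, v ≤ 3 * sSup S1 := by
    rintro v ⟨ε, hε, rfl⟩
    set B := A.filter (fun n => ε n = 1) with hBdef
    have hsum : ∑ n ∈ A, ε n • e n =
        (2 : ℝ) • (x + ∑ n ∈ B, e n) - (x + ∑ n ∈ A, e n) - x := by
      have h1 : ∑ n ∈ B, e n = ∑ n ∈ A, (if ε n = 1 then e n else 0) :=
        Finset.sum_filter _ _
      rw [h1, smul_add, Finset.smul_sum]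
      have : ∑ n ∈ A, ε n • e n
          = ∑ n ∈ A, ((2:ℝ) • (if ε n = 1 then e n else 0) - e n) := by
        apply Finset.sum_congr rfl
        intro n hn
        rcases hε n hn with h | h
        · rw [h]; simp [two_smul]
        · rw [h]; norm_num
      rw [this, Finset.sum_sub_distrib]
      module
    have hB1 : ‖x + ∑ n ∈ B, e n‖ ≤ sSup S1 :=
      le_csSup hS1bdd ⟨B, Finset.filter_subset _ _, rfl⟩
    have hA1 : ‖x + ∑ n ∈ A, e n‖ ≤ sSup S1 :=
      le_csSup hS1bdd ⟨A, le_refl _, rfl⟩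
    calc ‖x + ∑ n ∈ A, ε n • e n‖
        = ‖(2:ℝ) • (x + ∑ n ∈ B, e n) - (x + ∑ n ∈ A, e n)‖ := by
          rw [hsum]; congr 1; abel
      _ ≤ ‖(2:ℝ) • (x + ∑ n ∈ B, e n)‖ + ‖x + ∑ n ∈ A, e n‖ := norm_sub_le _ _
      _ = 2 * ‖x + ∑ n ∈ B, e n‖ + ‖x + ∑ n ∈ A, e n‖ := by
          rw [norm_smul]; norm_num
      _ ≤ 2 * sSup S1 + sSup S1 := by
          gcongr
      _ = 3 * sSup S1 := by ring
  have hS2bdd : BddAbove S2 := ⟨3 * sSup S1, key⟩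
  constructor
  · apply csSup_le hS1ne
    rintro v ⟨B, hB, rfl⟩
    have hε2 : ∀ n ∈ A, (fun n => if n ∈ B then (1:ℝ) else -1) n = 1 ∨
        (fun n => if n ∈ B then (1:ℝ) else -1) n = -1 := by
      intro n _; by_cases h : n ∈ B <;> simp [h]
    have h1 : ‖x + ∑ n ∈ A, (1:ℝ) • e n‖ ≤ sSup S2 :=
      le_csSup hS2bdd ⟨fun _ => 1, fun _ _ => Or.inl rfl, rfl⟩
    have h2 : ‖x + ∑ n ∈ A, (if n ∈ B then (1:ℝ) else -1) • e n‖ ≤ sSup S2 :=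
      le_csSup hS2bdd ⟨fun n => if n ∈ B then (1:ℝ) else -1, hε2, rfl⟩
    have hsum : (x + ∑ n ∈ A, (1:ℝ) • e n) +
        (x + ∑ n ∈ A, (if n ∈ B then (1:ℝ) else -1) • e n)
        = (2:ℝ) • (x + ∑ n ∈ B, e n) := by
      have : ∑ n ∈ A, ((1:ℝ) • e n + (if n ∈ B then (1:ℝ) else -1) • e n)
          = ∑ n ∈ A, (if n ∈ B then (2:ℝ) • e n else 0) := by
        apply Finset.sum_congr rfl
        intro n _
        by_cases h : n ∈ B <;> simp [h, two_smul]
      have h3 : ∑ n ∈ A, (if n ∈ B then (2:ℝ) • e n else 0) = ∑ n ∈ B, (2:ℝ) • e n := by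
        rw [Finset.sum_ite_mem, Finset.inter_eq_right.mpr hB]
      rw [smul_add, Finset.smul_sum]
      calc (x + ∑ n ∈ A, (1:ℝ) • e n) +
          (x + ∑ n ∈ A, (if n ∈ B then (1:ℝ) else -1) • e n)
          = (2:ℝ) • x + ∑ n ∈ A, ((1:ℝ) • e n + (if n ∈ B then (1:ℝ) else -1) • e n) := by
            rw [Finset.sum_add_distrib, two_smul]; abel
        _ = (2:ℝ) • x + ∑ n ∈ B, (2:ℝ) • e n := by rw [this, h3]
    calc ‖x + ∑ n ∈ B, e n‖
        = (1/2) * ‖(2:ℝ) • (x + ∑ n ∈ B, e n)‖ := by rw [norm_smul]; simp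
      _ = (1/2) * ‖(x + ∑ n ∈ A, (1:ℝ) • e n) +
          (x + ∑ n ∈ A, (if n ∈ B then (1:ℝ) else -1) • e n)‖ := by rw [hsum]
      _ ≤ (1/2) * (‖x + ∑ n ∈ A, (1:ℝ) • e n‖ +
          ‖x + ∑ n ∈ A, (if n ∈ B then (1:ℝ) else -1) • e n‖) := by
            gcongr; exact norm_add_le _ _
      _ ≤ (1/2) * (sSup S2 + sSup S2) := by gcongr
      _ = sSup S2 := by ring
  · exact csSup_le hS2ne key
end

section
/- Let (e_n) be a C-suppression unconditional basis of a Banach space X. Let x be finitely supported, A ⊆ supp(x), and set ε_n = e*_n(x)/|e*_n(x)| for n ∈ A. Then for every B ⊆ supp(x)∖A and every real t with 0 ≤ t ≤ min{|e*_n(x)| : n ∈ A}, ‖ Σ_{n∈B} e*_n(x) e_n + t·1_{εA} ‖ ≤ C ‖x‖. -/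
open Filter

lemma stmt_13_aux {X : Type*} [NormedAddCommGroup X] [NormedSpace ℝ X]
    (D : ℝ) (a : ℕ → X) (c : ℕ → ℝ) (s : Finset ℕ) :
    ∀ v : X, (∀ n ∈ s, 0 ≤ c n ∧ c n ≤ 1) →
    (∀ M ⊆ s, ‖v + ∑ n ∈ M, a n‖ ≤ D) →
    ‖v + ∑ n ∈ s, c n • a n‖ ≤ D := by
  classical
  induction s using Finset.induction_on with
  | empty => intro v _ hM; simpa using hM ∅ (by simp)
  | @insert m s hm ih =>
    intro v hc hM
    have hc0 : 0 ≤ c m := (hc m (Finset.mem_insert_self m s)).1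
    have hc1 : c m ≤ 1 := (hc m (Finset.mem_insert_self m s)).2
    have h1 : v + ∑ n ∈ insert m s, c n • a n
        = c m • ((v + a m) + ∑ n ∈ s, c n • a n)
          + (1 - c m) • (v + ∑ n ∈ s, c n • a n) := by
      rw [Finset.sum_insert hm]; module
    have h2 : ‖(v + a m) + ∑ n ∈ s, c n • a n‖ ≤ D := by
      apply ih
      · intro n hn; exact hc n (Finset.mem_insert_of_mem hn)
      · intro M hMs
        have hmM : m ∉ M := fun h => hm (hMs h)
        have := hM (insert m M) (Finset.insert_subset_insert _ hMs)
        rwa [Finset.sum_insert hmM, ← add_assoc] at this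
    have h3 : ‖v + ∑ n ∈ s, c n • a n‖ ≤ D :=
      ih v (fun n hn => hc n (Finset.mem_insert_of_mem hn))
        (fun M hMs => hM M (hMs.trans (Finset.subset_insert _ _)))
    calc ‖v + ∑ n ∈ insert m s, c n • a n‖
        ≤ ‖c m • ((v + a m) + ∑ n ∈ s, c n • a n)‖
          + ‖(1 - c m) • (v + ∑ n ∈ s, c n • a n)‖ := by
            rw [h1]; exact norm_add_le _ _
      _ = c m * ‖(v + a m) + ∑ n ∈ s, c n • a n‖
          + (1 - c m) * ‖v + ∑ n ∈ s, c n • a n‖ := by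
            rw [norm_smul, norm_smul, Real.norm_of_nonneg hc0,
              Real.norm_of_nonneg (by linarith)]
      _ ≤ c m * D + (1 - c m) * D := by
            have h4 := mul_le_mul_of_nonneg_left h2 hc0
            have h5 := mul_le_mul_of_nonneg_left h3 (by linarith : (0:ℝ) ≤ 1 - c m)
            linarith
      _ = D := by ring

/-- Proposition 3.5: if `(e_n)` is a `C`-suppression unconditional basis of `X`, `x` is
finitely supported with support `S`, `A ⊆ S`, `ε_n = sign(f_n(x))` on `A`, then for every
`B ⊆ S \ A` and `0 ≤ t ≤ min {|f_n(x)| : n ∈ A}`,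
`‖∑_{n∈B} f_n(x) e_n + t 1_{εA}‖ ≤ C ‖x‖`. -/
theorem stmt_13 {X : Type*} [NormedAddCommGroup X] [NormedSpace ℝ X] [CompleteSpace X]
    (e : ℕ → X) (f : ℕ → X →L[ℝ] ℝ)
    (hbi : ∀ m n : ℕ, f m (e n) = if m = n then 1 else 0)
    (hexp : ∀ z : X, Tendsto (fun N => ∑ n ∈ Finset.range N, f n z • e n) atTop (nhds z))
    (C : ℝ)
    (hsu : ∀ (z : X) (M : Finset ℕ), ‖∑ n ∈ M, f n z • e n‖ ≤ C * ‖z‖)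
    (x : X) (S : Finset ℕ) (hS : ∀ n : ℕ, f n x ≠ 0 ↔ n ∈ S)
    (A : Finset ℕ) (hA : A ⊆ S)
    (B : Finset ℕ) (hB : B ⊆ S \ A)
    (t : ℝ) (ht0 : 0 ≤ t) (ht : ∀ n ∈ A, t ≤ |f n x|) :
    ‖(∑ n ∈ B, f n x • e n) + t • ∑ n ∈ A, (f n x / |f n x|) • e n‖ ≤ C * ‖x‖ := by
  classical
  have hdisj : Disjoint B A := by
    rw [Finset.disjoint_left]
    intro n hn
    exact (Finset.mem_sdiff.mp (hB hn)).2
  set c : ℕ → ℝ := fun n => if n ∈ B then 1 else t / |f n x| with hc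
  have key : (∑ n ∈ B, f n x • e n) + t • ∑ n ∈ A, (f n x / |f n x|) • e n
      = (0 : X) + ∑ n ∈ B ∪ A, c n • (f n x • e n) := by
    rw [zero_add, Finset.sum_union hdisj]
    congr 1
    · exact Finset.sum_congr rfl fun n hn => by simp [hc, hn]
    · rw [Finset.smul_sum]
      refine Finset.sum_congr rfl fun n hn => ?_
      have hnB : n ∉ B := Finset.disjoint_right.mp hdisj hn
      simp only [hc, if_neg hnB, smul_smul]
      congr 1
      ring
  rw [key]
  apply stmt_13_aux
  · intro n hn
    rcases Finset.mem_union.mp hn with h | h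
    · simp [hc, h]
    · have hnB : n ∉ B := Finset.disjoint_right.mp hdisj h
      have hf : f n x ≠ 0 := (hS n).mpr (hA h)
      have hfpos : 0 < |f n x| := abs_pos.mpr hf
      constructor
      · simp only [hc, if_neg hnB]
        positivity
      · simp only [hc, if_neg hnB]
        exact div_le_one_of_le₀ (ht n h) hfpos.le
  · intro M _
    simpa using hsu x M
end

section
/- If a Schauder basis B of a Banach space X has Property (Q) with constant C, then B is C-democratic and C-suppression unconditional. Conversely, if B is D-democratic and C-suppression unconditional, then B has Property (Q) with constant C(1+D). -/
open Filter

/-- The vector with finitely many coefficients `c` with respect to the sequence `(e_n)`. -/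
noncomputable def vec {X : Type*} [NormedAddCommGroup X] [NormedSpace ℝ X]
    (e : ℕ → X) (c : ℕ →₀ ℝ) : X := ∑ n ∈ c.support, c n • e n

/-- Property (Q) with constant `C`: `‖x + 1_A‖ ≤ C ‖x + y + 1_B‖` for all finite `A, B`
with `|A| = |B|`, `A ∩ B = ∅`, and finitely supported `x, y` with disjoint supports,
`‖x̃‖_∞ ≤ 1` and `supp(x+y) ∩ (A ∪ B) = ∅`. -/
def PropQ {X : Type*} [NormedAddCommGroup X] [NormedSpace ℝ X] (e : ℕ → X) (C : ℝ) : Prop :=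
  ∀ (A B : Finset ℕ) (c d : ℕ →₀ ℝ), A.card = B.card → Disjoint A B →
    Disjoint c.support d.support → (∀ n, |c n| ≤ 1) →
    Disjoint (c.support ∪ d.support) (A ∪ B) →
    ‖vec e c + ∑ n ∈ A, e n‖ ≤ C * ‖vec e c + vec e d + ∑ n ∈ B, e n‖

lemma vec_eq_sum {X : Type*} [NormedAddCommGroup X] [NormedSpace ℝ X]
    (e : ℕ → X) (c : ℕ →₀ ℝ) (S : Finset ℕ) (h : c.support ⊆ S) :
    vec e c = ∑ n ∈ S, c n • e n := by
  rw [vec]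
  exact Finset.sum_subset h (fun n _ hn => by
    simp [Finsupp.notMem_support_iff.mp hn])

/-- Finite-dimensional suppression unconditionality from Property (Q). -/
lemma finite_suppr {X : Type*} [NormedAddCommGroup X] [NormedSpace ℝ X]
    {e : ℕ → X} {C : ℝ} (hQ : PropQ e C) (c : ℕ →₀ ℝ) (M : Finset ℕ) :
    ‖∑ n ∈ M, c n • e n‖ ≤ C * ‖vec e c‖ := by
  set t : ℝ := 1 + ∑ n ∈ c.support, |c n| with ht_def
  have hsum_nonneg : (0:ℝ) ≤ ∑ n ∈ c.support, |c n| :=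
    Finset.sum_nonneg fun i _ => abs_nonneg _
  have ht : 0 < t := by positivity
  have hcn : ∀ n, |c n| ≤ t := by
    intro n
    by_cases h : n ∈ c.support
    · have := Finset.single_le_sum (f := fun n => |c n|) (fun i _ => abs_nonneg _) h
      simp only [ht_def]; linarith
    · simp [Finsupp.notMem_support_iff.mp h]; linarith
  set c1 : ℕ →₀ ℝ := t⁻¹ • (c.filter (· ∈ M)) with hc1
  set c2 : ℕ →₀ ℝ := t⁻¹ • (c.filter (· ∉ M)) with hc2
  have hs1 : c1.support ⊆ c.support.filter (· ∈ M) := by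
    rw [hc1]
    exact (Finsupp.support_smul).trans (by rw [Finsupp.support_filter])
  have hs2 : c2.support ⊆ c.support.filter (· ∉ M) := by
    rw [hc2]
    exact (Finsupp.support_smul).trans (by rw [Finsupp.support_filter])
  have hd : Disjoint c1.support c2.support := by
    apply Finset.disjoint_left.mpr
    intro n h1 h2
    have h1' := hs1 h1
    have h2' := hs2 h2
    simp only [Finset.mem_filter] at h1' h2'
    exact h2'.2 h1'.2
  have hb : ∀ n, |c1 n| ≤ 1 := by
    intro n
    have : |c.filter (· ∈ M) n| ≤ t := by
      rw [Finsupp.filter_apply]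
      split
      · exact hcn n
      · simpa using ht.le
    rw [hc1]
    simp only [Finsupp.smul_apply, smul_eq_mul, abs_mul, abs_inv, abs_of_pos ht]
    calc t⁻¹ * |c.filter (· ∈ M) n| ≤ t⁻¹ * t := by
          exact mul_le_mul_of_nonneg_left this (inv_nonneg.mpr ht.le)
      _ = 1 := inv_mul_cancel₀ ht.ne'
  have key := hQ ∅ ∅ c1 c2 rfl (by simp) hd hb (by simp)
  simp only [Finset.sum_empty, add_zero] at key
  -- compute vec e c1
  have hv1 : vec e c1 = t⁻¹ • ∑ n ∈ M, c n • e n := by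
    rw [vec_eq_sum e c1 M (hs1.trans (fun x hx => (Finset.mem_filter.mp hx).2))]
    rw [Finset.smul_sum]
    apply Finset.sum_congr rfl
    intro n hn
    rw [hc1]
    simp only [Finsupp.smul_apply, Finsupp.filter_apply, if_pos hn, smul_eq_mul, mul_smul]
  -- combine vec e c1 + vec e c2 = t⁻¹ • vec e c
  have hv12 : vec e c1 + vec e c2 = t⁻¹ • vec e c := by
    rw [vec_eq_sum e c1 c.support (hs1.trans (Finset.filter_subset _ _)),
        vec_eq_sum e c2 c.support (hs2.trans (Finset.filter_subset _ _)),
        ← Finset.sum_add_distrib, vec, Finset.smul_sum]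
    apply Finset.sum_congr rfl
    intro n _
    rw [hc1, hc2]
    simp only [Finsupp.smul_apply, Finsupp.filter_apply, smul_eq_mul]
    by_cases h : n ∈ M
    · simp [h, mul_smul]
    · simp [h, mul_smul]
  rw [hv12, hv1] at key
  rw [norm_smul, norm_smul, Real.norm_eq_abs, abs_of_pos (inv_pos.mpr ht)] at key
  have := mul_le_mul_of_nonneg_left key ht.le
  rw [← mul_assoc, mul_inv_cancel₀ ht.ne', one_mul, ← mul_assoc, mul_comm t C,
      mul_assoc, ← mul_assoc t, mul_inv_cancel₀ ht.ne', one_mul] at this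
  exact this

lemma f_vec {X : Type*} [NormedAddCommGroup X] [NormedSpace ℝ X]
    (e : ℕ → X) (f : ℕ → X →L[ℝ] ℝ)
    (hbi : ∀ m n : ℕ, f m (e n) = if m = n then 1 else 0)
    (c : ℕ →₀ ℝ) (m : ℕ) : f m (vec e c) = c m := by
  rw [vec, map_sum]
  simp only [map_smul, hbi, smul_eq_mul, mul_ite, mul_one, mul_zero]
  rw [Finset.sum_ite_eq]
  by_cases h : m ∈ c.support
  · rw [if_pos h]
  · rw [if_neg h, eq_comm]
    exact Finsupp.notMem_support_iff.mp h

/-- Remark 1.2: Property (Q) with constant `C` implies that the basis is `C`-democratic and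
`C`-suppression unconditional; conversely a `D`-democratic and `C`-suppression unconditional
basis has Property (Q) with constant `C(1+D)`. -/
theorem stmt_14 {X : Type*} [NormedAddCommGroup X] [NormedSpace ℝ X] [CompleteSpace X]
    (e : ℕ → X) (f : ℕ → X →L[ℝ] ℝ)
    (hbi : ∀ m n : ℕ, f m (e n) = if m = n then 1 else 0)
    (hexp : ∀ z : X, Tendsto (fun N => ∑ n ∈ Finset.range N, f n z • e n) atTop (nhds z))
    (C D : ℝ) :
    (PropQ e C →
      (∀ A B : Finset ℕ, A.card = B.card → ‖∑ n ∈ A, e n‖ ≤ C * ‖∑ n ∈ B, e n‖) ∧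
      (∀ (z : X) (M : Finset ℕ), ‖∑ n ∈ M, f n z • e n‖ ≤ C * ‖z‖)) ∧
    ((∀ A B : Finset ℕ, A.card = B.card → ‖∑ n ∈ A, e n‖ ≤ D * ‖∑ n ∈ B, e n‖) →
      (∀ (z : X) (M : Finset ℕ), ‖∑ n ∈ M, f n z • e n‖ ≤ C * ‖z‖) →
      PropQ e (C * (1 + D))) := by
  have he0 : e 0 ≠ 0 := by
    intro h
    have := hbi 0 0
    rw [h, map_zero] at this
    simp at this
  constructor
  · intro hQ
    constructor
    · -- democracy
      intro A B hcard
      set c : ℕ →₀ ℝ := Finsupp.indicator (A ∩ B) (fun _ _ => 1) with hc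
      have hsupc : c.support = A ∩ B := by
        ext n
        simp [hc, Finsupp.mem_support_iff, Finsupp.indicator_apply]
      have hkey := hQ (A \ B) (B \ A) c 0 (Finset.card_sdiff_comm hcard)
        (disjoint_sdiff_sdiff) (by simp)
        (fun n => by
          rw [hc, Finsupp.indicator_apply]
          split <;> simp)
        (by
          rw [Finsupp.support_zero, Finset.union_empty, hsupc]
          apply Finset.disjoint_left.mpr
          intro n hn hn2
          simp only [Finset.mem_inter] at hn
          simp only [Finset.mem_union, Finset.mem_sdiff] at hn2
          rcases hn2 with h | h
          · exact h.2 hn.2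
          · exact h.2 hn.1)
      have hvc : vec e c = ∑ n ∈ A ∩ B, e n := by
        rw [vec, hsupc]
        apply Finset.sum_congr rfl
        intro n hn
        rw [hc, Finsupp.indicator_apply, dif_pos hn, one_smul]
      have hdisj1 : Disjoint (A ∩ B) (A \ B) := Finset.disjoint_left.mpr
        fun n hn hn2 => (Finset.mem_sdiff.mp hn2).2 (Finset.mem_inter.mp hn).2
      have hdisj2 : Disjoint (B ∩ A) (B \ A) := Finset.disjoint_left.mpr
        fun n hn hn2 => (Finset.mem_sdiff.mp hn2).2 (Finset.mem_inter.mp hn).2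
      have hv0 : vec e (0 : ℕ →₀ ℝ) = 0 := by simp [vec]
      have hA : vec e c + ∑ n ∈ A \ B, e n = ∑ n ∈ A, e n := by
        rw [hvc, ← Finset.sum_union hdisj1]
        congr 1
        ext n
        simp only [Finset.mem_union, Finset.mem_inter, Finset.mem_sdiff]
        tauto
      have hB : vec e c + vec e 0 + ∑ n ∈ B \ A, e n = ∑ n ∈ B, e n := by
        rw [hvc, hv0, add_zero, Finset.inter_comm, ← Finset.sum_union hdisj2]
        congr 1
        ext n
        simp only [Finset.mem_union, Finset.mem_inter, Finset.mem_sdiff]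
        tauto
      rw [hA, hB] at hkey
      exact hkey
    · -- suppression unconditionality
      intro z M
      have hfin : ∀ N, M ⊆ Finset.range N →
          ‖∑ n ∈ M, f n z • e n‖ ≤ C * ‖∑ n ∈ Finset.range N, f n z • e n‖ := by
        intro N hMN
        set cN : ℕ →₀ ℝ := Finsupp.indicator (Finset.range N) (fun n _ => f n z) with hcN
        have h1 : ∑ n ∈ M, f n z • e n = ∑ n ∈ M, cN n • e n := by
          apply Finset.sum_congr rfl
          intro n hn
          rw [hcN, Finsupp.indicator_apply, dif_pos (hMN hn)]
        have h2 : vec e cN = ∑ n ∈ Finset.range N, f n z • e n := by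
          rw [vec_eq_sum e cN (Finset.range N)
            (fun n hn => by exact_mod_cast Finsupp.support_indicator_subset _ _ hn)]
          apply Finset.sum_congr rfl
          intro n hn
          rw [hcN, Finsupp.indicator_apply, dif_pos hn]
        rw [h1, ← h2]
        exact finite_suppr hQ cN M
      apply ge_of_tendsto (((hexp z).norm).const_mul C)
      filter_upwards [eventually_ge_atTop (M.sup id + 1)] with N hN
      apply hfin
      intro m hm
      simp only [Finset.mem_range]
      have := Finset.le_sup (f := id) hm
      simp only [id_eq] at this
      omega
  · -- converse
    intro hdem hsup
    intro A B c d hcard hAB hcd hc hsupp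
    set z : X := vec e c + vec e d + ∑ n ∈ B, e n with hz
    have hfz : ∀ n, f n z = c n + d n + (if n ∈ B then 1 else 0) := by
      intro n
      rw [hz, map_add, map_add, f_vec e f hbi, f_vec e f hbi, map_sum]
      simp only [hbi]
      rw [Finset.sum_ite_eq]
    have hvc : vec e c = ∑ n ∈ c.support, f n z • e n := by
      rw [vec]
      apply Finset.sum_congr rfl
      intro n hn
      have hd0 : d n = 0 := Finsupp.notMem_support_iff.mp
        (Finset.disjoint_left.mp hcd hn)
      have hnB : n ∉ B := fun hB => Finset.disjoint_left.mp hsupp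
        (Finset.mem_union_left _ hn) (Finset.mem_union_right _ hB)
      rw [hfz n, hd0, if_neg hnB, add_zero, add_zero]
    have hvB : (∑ n ∈ B, e n) = ∑ n ∈ B, f n z • e n := by
      apply Finset.sum_congr rfl
      intro n hn
      have hnc : c n = 0 := Finsupp.notMem_support_iff.mp (fun hsc =>
        Finset.disjoint_left.mp hsupp (Finset.mem_union_left _ hsc)
          (Finset.mem_union_right _ hn))
      have hnd : d n = 0 := Finsupp.notMem_support_iff.mp (fun hsd =>
        Finset.disjoint_left.mp hsupp (Finset.mem_union_right _ hsd)
          (Finset.mem_union_right _ hn))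
      rw [hfz n, hnc, hnd, if_pos hn, zero_add, zero_add, one_smul]
    have h1 : ‖vec e c‖ ≤ C * ‖z‖ := by rw [hvc]; exact hsup z c.support
    have h2 : ‖∑ n ∈ B, e n‖ ≤ C * ‖z‖ := by rw [hvB]; exact hsup z B
    have hD0 : 0 ≤ D := by
      have := hdem {0} {0} rfl
      have hne : 0 < ‖e 0‖ := norm_pos_iff.mpr he0
      simp only [Finset.sum_singleton] at this
      nlinarith
    have h3 : ‖∑ n ∈ A, e n‖ ≤ D * (C * ‖z‖) :=
      (hdem A B hcard).trans (mul_le_mul_of_nonneg_left h2 hD0)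
    calc ‖vec e c + ∑ n ∈ A, e n‖ ≤ ‖vec e c‖ + ‖∑ n ∈ A, e n‖ := norm_add_le _ _
      _ ≤ C * ‖z‖ + D * (C * ‖z‖) := add_le_add h1 h3
      _ = C * (1 + D) * ‖z‖ := by ring
end

section
/- If a Schauder basis B of a Banach space X satisfies ‖x − G_m(x)‖ ≤ C·D_m(x) for all x ∈ X and m ∈ ℕ, then B is C-suppression unconditional (i.e., ‖P_A(x)‖ ≤ C‖x‖ for all finite A and finitely supported x). -/
open Filter

/-- `Λ` is the set of indices of the `|Λ|` largest-in-modulus coefficients of `x`, ties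
broken by smallest index (the natural greedy ordering), so that
`G_{|Λ|}(x) = ∑_{n ∈ Λ} f_n(x) e_n`. -/
def IsGreedySet {X : Type*} [NormedAddCommGroup X] [NormedSpace ℝ X]
    (f : ℕ → X →L[ℝ] ℝ) (x : X) (Λ : Finset ℕ) : Prop :=
  ∀ n ∈ Λ, ∀ k ∉ Λ, |f k x| < |f n x| ∨ (|f k x| = |f n x| ∧ n < k)

/-- If `‖x - G_m(x)‖ ≤ C D_m(x)` for all `x` and `m`, then the basis is `C`-suppression
unconditional: `‖P_A(x)‖ ≤ C ‖x‖` for all finite `A` and finitely supported `x`. -/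
theorem stmt_16 {X : Type*} [NormedAddCommGroup X] [NormedSpace ℝ X] [CompleteSpace X]
    (e : ℕ → X) (f : ℕ → X →L[ℝ] ℝ)
    (hbi : ∀ m n : ℕ, f m (e n) = if m = n then 1 else 0)
    (hexp : ∀ z : X, Tendsto (fun N => ∑ n ∈ Finset.range N, f n z • e n) atTop (nhds z))
    (C : ℝ)
    (hG : ∀ (x : X) (m : ℕ) (Λ : Finset ℕ), Λ.card = m → IsGreedySet f x Λ →
      ‖x - ∑ n ∈ Λ, f n x • e n‖ ≤
        C * sInf {d : ℝ | ∃ (A : Finset ℕ) (α : ℝ), A.card = m ∧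
          d = ‖x - α • ∑ n ∈ A, e n‖}) :
    ∀ (c : ℕ →₀ ℝ) (A : Finset ℕ),
      ‖∑ n ∈ A, c n • e n‖ ≤ C * ‖∑ n ∈ c.support, c n • e n‖ := by
  -- first: C ≥ 0
  have he0 : e 0 ≠ 0 := by
    intro h
    have := hbi 0 0
    rw [h] at this
    simp at this
  have hC : 0 ≤ C := by
    have h0 := hG (e 0) 0 ∅ rfl (by intro n hn; simp at hn)
    have hS : {d : ℝ | ∃ (A : Finset ℕ) (α : ℝ), A.card = 0 ∧
        d = ‖e 0 - α • ∑ n ∈ A, e n‖} = {‖e 0‖} := by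
      ext d
      simp only [Set.mem_setOf_eq, Set.mem_singleton_iff, Finset.card_eq_zero]
      constructor
      · rintro ⟨A, α, rfl, rfl⟩; simp
      · rintro rfl; exact ⟨∅, 0, rfl, by simp⟩
    rw [hS, csInf_singleton] at h0
    simp only [Finset.sum_empty, sub_zero] at h0
    have hpos : 0 < ‖e 0‖ := norm_pos_iff.mpr he0
    nlinarith
  intro c A
  set B := c.support with hB
  set A' := A ∩ B with hA'
  have hA'B : A' ⊆ B := Finset.inter_subset_right
  have hsumA : ∑ n ∈ A, c n • e n = ∑ n ∈ A', c n • e n := by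
    refine (Finset.sum_subset Finset.inter_subset_left ?_).symm
    intro n hn hn'
    have : n ∉ B := fun h => hn' (Finset.mem_inter.mpr ⟨hn, h⟩)
    rw [Finsupp.notMem_support_iff] at this
    simp [this]
  set x : X := ∑ n ∈ B, c n • e n with hx
  set M : ℝ := ∑ n ∈ B, |c n| with hM
  have hMk : ∀ k, |c k| ≤ M := by
    intro k
    by_cases hk : k ∈ B
    · exact Finset.single_le_sum (f := fun n => |c n|) (fun n _ => abs_nonneg _) hk
    · rw [Finsupp.notMem_support_iff] at hk
      simp only [hk, abs_zero]
      exact Finset.sum_nonneg fun n _ => abs_nonneg _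
  have hM0 : 0 ≤ M := le_trans (abs_nonneg _) (hMk 0)
  set α : ℝ := 2 * M + 1 with hα
  set Λ : Finset ℕ := B \ A' with hΛ
  set y : X := x + α • ∑ n ∈ Λ, e n with hy
  -- coefficients of y
  have fx : ∀ k, f k x = c k := by
    intro k
    rw [hx, map_sum]
    simp only [map_smul, hbi, smul_eq_mul, mul_ite, mul_one, mul_zero]
    rw [Finset.sum_ite_eq B k fun n => c n]
    by_cases hk : k ∈ B
    · simp [hk]
    · rw [Finsupp.notMem_support_iff] at hk
      simp [hk]
  have find : ∀ k, f k (∑ n ∈ Λ, e n) = if k ∈ Λ then 1 else 0 := by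
    intro k
    rw [map_sum]
    simp only [hbi]
    rw [Finset.sum_ite_eq Λ k fun _ => (1:ℝ)]
  have fy : ∀ k, f k y = c k + (if k ∈ Λ then α else 0) := by
    intro k
    rw [hy, map_add, fx, map_smul, find, smul_eq_mul]
    by_cases hk : k ∈ Λ <;> simp [hk]
  have hgreedy : IsGreedySet f y Λ := by
    intro n hn k hk
    left
    rw [fy, fy, if_pos hn, if_neg hk]
    have h1 : -M ≤ c n := neg_le_of_abs_le (hMk n)
    have h2 : |c k| ≤ M := hMk k
    have h3 : c n + α ≤ |c n + α| := le_abs_self _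
    have : |c k + 0| = |c k| := by rw [add_zero]
    rw [this]
    rw [hα] at h3 ⊢
    linarith
  have hmain := hG y Λ.card Λ rfl hgreedy
  -- simplify LHS of hmain
  have hLHS : y - ∑ n ∈ Λ, f n y • e n = ∑ n ∈ A', c n • e n := by
    have : ∑ n ∈ Λ, f n y • e n = ∑ n ∈ Λ, c n • e n + α • ∑ n ∈ Λ, e n := by
      rw [Finset.smul_sum, ← Finset.sum_add_distrib]
      refine Finset.sum_congr rfl fun n hn => ?_
      rw [fy, if_pos hn, add_smul]
    rw [this, hy]
    have hsd : ∑ n ∈ Λ, c n • e n + ∑ n ∈ A', c n • e n = x := by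
      rw [hΛ, hx]
      exact Finset.sum_sdiff hA'B
    have : ∑ n ∈ A', c n • e n = x - ∑ n ∈ Λ, c n • e n := by
      rw [← hsd]; abel
    rw [this]; abel
  rw [hLHS] at hmain
  -- sInf bound
  have hmem : ‖x‖ ∈ {d : ℝ | ∃ (A : Finset ℕ) (β : ℝ), A.card = Λ.card ∧
      d = ‖y - β • ∑ n ∈ A, e n‖} := by
    refine ⟨Λ, α, rfl, ?_⟩
    rw [hy]
    congr 1
    abel
  have hbdd : BddBelow {d : ℝ | ∃ (A : Finset ℕ) (β : ℝ), A.card = Λ.card ∧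
      d = ‖y - β • ∑ n ∈ A, e n‖} := by
    refine ⟨0, ?_⟩
    rintro d ⟨A'', β, -, rfl⟩
    exact norm_nonneg _
  have hinf : sInf {d : ℝ | ∃ (A : Finset ℕ) (β : ℝ), A.card = Λ.card ∧
      d = ‖y - β • ∑ n ∈ A, e n‖} ≤ ‖x‖ := csInf_le hbdd hmem
  calc ‖∑ n ∈ A, c n • e n‖ = ‖∑ n ∈ A', c n • e n‖ := by rw [hsumA]
    _ ≤ C * sInf {d : ℝ | ∃ (A : Finset ℕ) (β : ℝ), A.card = Λ.card ∧
        d = ‖y - β • ∑ n ∈ A, e n‖} := hmain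
    _ ≤ C * ‖x‖ := mul_le_mul_of_nonneg_left hinf hC
end

section
/- If a Schauder basis B of a Banach space X satisfies ‖x − G_m(x)‖ ≤ C·D_m(x) for all x ∈ X and m ∈ ℕ, then B is C-democratic: ‖1_B‖ ≤ C‖1_A‖ for all finite sets A, B with |A| = |B|. -/
open Filter

/-- If `‖x - G_m(x)‖ ≤ C D_m(x)` for all `x` and `m`, then the basis is `C`-democratic:
`‖1_B‖ ≤ C ‖1_A‖` whenever `|A| = |B|`. -/
theorem stmt_17 {X : Type*} [NormedAddCommGroup X] [NormedSpace ℝ X] [CompleteSpace X]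
    (e : ℕ → X) (f : ℕ → X →L[ℝ] ℝ)
    (hbi : ∀ m n : ℕ, f m (e n) = if m = n then 1 else 0)
    (hexp : ∀ z : X, Tendsto (fun N => ∑ n ∈ Finset.range N, f n z • e n) atTop (nhds z))
    (C : ℝ)
    (hG : ∀ (x : X) (m : ℕ) (Λ : Finset ℕ), Λ.card = m → IsGreedySet f x Λ →
      ‖x - ∑ n ∈ Λ, f n x • e n‖ ≤
        C * sInf {d : ℝ | ∃ (A : Finset ℕ) (α : ℝ), A.card = m ∧
          d = ‖x - α • ∑ n ∈ A, e n‖}) :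
    ∀ A B : Finset ℕ, A.card = B.card → ‖∑ n ∈ B, e n‖ ≤ C * ‖∑ n ∈ A, e n‖ := by
  classical
  -- first: C ≥ 0
  have hC : 0 ≤ C := by
    have he0 : e 0 ≠ 0 := by
      intro h
      have := hbi 0 0
      rw [h] at this
      simp at this
    have hgr : IsGreedySet f (e 0) ∅ := by
      intro n hn
      exact absurd hn (Finset.notMem_empty n)
    have h := hG (e 0) 0 ∅ rfl hgr
    have hset : {d : ℝ | ∃ (A : Finset ℕ) (α : ℝ), A.card = 0 ∧
        d = ‖e 0 - α • ∑ n ∈ A, e n‖} = {‖e 0‖} := by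
      ext d
      simp only [Set.mem_setOf_eq, Set.mem_singleton_iff]
      constructor
      · rintro ⟨A, α, hA, rfl⟩
        rw [Finset.card_eq_zero] at hA
        simp [hA]
      · rintro rfl
        exact ⟨∅, 0, rfl, by simp⟩
    rw [hset] at h
    simp only [Finset.sum_empty, sub_zero] at h
    rw [csInf_singleton] at h
    have hpos : 0 < ‖e 0‖ := norm_pos_iff.mpr he0
    nlinarith
  intro A B hAB
  have key : ∀ ε : ℝ, 0 < ε →
      ‖∑ n ∈ B, e n‖ ≤ C * ‖∑ n ∈ A, e n‖ + ε * (C * ‖∑ n ∈ A \ B, e n‖) := by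
    intro ε hε
    set x : X := (1 + ε) • ∑ n ∈ A \ B, e n + ∑ n ∈ B, e n with hx
    have hfx : ∀ k, f k x =
        (if k ∈ A \ B then 1 + ε else 0) + (if k ∈ B then 1 else 0) := by
      intro k
      rw [hx]
      rw [map_add, map_smul, map_sum, map_sum]
      simp only [hbi]
      rw [Finset.sum_ite_eq (A \ B) k (fun _ => (1 : ℝ)),
        Finset.sum_ite_eq B k (fun _ => (1 : ℝ))]
      by_cases h1 : k ∈ A \ B <;> by_cases h2 : k ∈ B <;> simp [h1, h2] <;> ring
    have hgreedy : IsGreedySet f x (A \ B) := by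
      intro n hn k hk
      left
      rw [hfx n, hfx k]
      have hnB : n ∉ B := (Finset.mem_sdiff.mp hn).2
      simp only [hn, hnB, if_true, if_false, if_neg hk, add_zero, zero_add]
      by_cases h2 : k ∈ B
      · rw [if_pos h2, abs_one, abs_of_pos (by linarith)]
        linarith
      · rw [if_neg h2, abs_zero, abs_of_pos (by linarith)]
        linarith
    have h1 : x - ∑ n ∈ A \ B, f n x • e n = ∑ n ∈ B, e n := by
      have : ∑ n ∈ A \ B, f n x • e n = (1 + ε) • ∑ n ∈ A \ B, e n := by
        rw [Finset.smul_sum]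
        apply Finset.sum_congr rfl
        intro n hn
        rw [hfx n]
        have hnB : n ∉ B := (Finset.mem_sdiff.mp hn).2
        simp [hn, hnB]
      rw [this, hx]
      abel
    have hcard : (B \ A).card = (A \ B).card := Finset.card_sdiff_comm hAB.symm
    have h2 : x - (1 : ℝ) • ∑ n ∈ B \ A, e n = ∑ n ∈ A, e n + ε • ∑ n ∈ A \ B, e n := by
      have hBsplit : ∑ n ∈ B \ A, e n + ∑ n ∈ A ∩ B, e n = ∑ n ∈ B, e n := by
        have h := Finset.sum_sdiff (Finset.inter_subset_right : A ∩ B ⊆ B) (f := e)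
        rwa [show B \ (A ∩ B) = B \ A by rw [Finset.sdiff_inter_self_right]] at h
      have hAsplit : ∑ n ∈ A \ B, e n + ∑ n ∈ A ∩ B, e n = ∑ n ∈ A, e n := by
        have h := Finset.sum_sdiff (Finset.inter_subset_left : A ∩ B ⊆ A) (f := e)
        rwa [show A \ (A ∩ B) = A \ B by rw [Finset.sdiff_inter_self_left]] at h
      rw [hx, one_smul, ← hBsplit, ← hAsplit]
      rw [add_smul, one_smul]
      abel
    have hGx := hG x (A \ B).card (A \ B) rfl hgreedy
    rw [h1] at hGx
    refine hGx.trans ?_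
    have hbdd : BddBelow {d : ℝ | ∃ (A' : Finset ℕ) (α : ℝ), A'.card = (A \ B).card ∧
        d = ‖x - α • ∑ n ∈ A', e n‖} := by
      refine ⟨0, ?_⟩
      rintro d ⟨A', α, hA', rfl⟩
      exact norm_nonneg _
    have hmem : ‖x - (1 : ℝ) • ∑ n ∈ B \ A, e n‖ ∈ {d : ℝ | ∃ (A' : Finset ℕ) (α : ℝ),
        A'.card = (A \ B).card ∧ d = ‖x - α • ∑ n ∈ A', e n‖} := ⟨B \ A, 1, hcard, rfl⟩
    have hle : sInf {d : ℝ | ∃ (A' : Finset ℕ) (α : ℝ), A'.card = (A \ B).card ∧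
        d = ‖x - α • ∑ n ∈ A', e n‖} ≤ ‖∑ n ∈ A, e n‖ + ε * ‖∑ n ∈ A \ B, e n‖ := by
      refine csInf_le_of_le hbdd hmem ?_
      rw [h2]
      calc ‖∑ n ∈ A, e n + ε • ∑ n ∈ A \ B, e n‖
          ≤ ‖∑ n ∈ A, e n‖ + ‖ε • ∑ n ∈ A \ B, e n‖ := norm_add_le _ _
        _ = ‖∑ n ∈ A, e n‖ + ε * ‖∑ n ∈ A \ B, e n‖ := by
            rw [norm_smul, Real.norm_of_nonneg hε.le]
    calc C * sInf _ ≤ C * (‖∑ n ∈ A, e n‖ + ε * ‖∑ n ∈ A \ B, e n‖) :=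
          mul_le_mul_of_nonneg_left hle hC
      _ = C * ‖∑ n ∈ A, e n‖ + ε * (C * ‖∑ n ∈ A \ B, e n‖) := by ring
  -- let ε → 0
  refine le_of_forall_pos_le_add ?_
  intro δ hδ
  set M := C * ‖∑ n ∈ A \ B, e n‖ with hM
  have hM0 : 0 ≤ M := mul_nonneg hC (norm_nonneg _)
  have hε : (0:ℝ) < δ / (M + 1) := div_pos hδ (by linarith)
  have := key _ hε
  have hle : δ / (M + 1) * M ≤ δ := by
    rw [div_mul_eq_mul_div, div_le_iff₀ (by linarith)]
    nlinarith
  linarith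
end

section
/- If a Schauder basis B of a Banach space X has Property (Q*) with constant C, then B is C²-greedy: ‖x − G_m(x)‖ ≤ C²·σ_m(x) for all x ∈ X and all m ∈ ℕ, where σ_m(x) = inf{ ‖x − b‖ : b ∈ span{e_n : n ∈ A}, |A| = m }. -/
open Filter

/-- Property (Q*) with constant `C`. -/
def PropQstar {X : Type*} [NormedAddCommGroup X] [NormedSpace ℝ X] (e : ℕ → X) (C : ℝ) : Prop :=
  ∀ (c z y : ℕ →₀ ℝ), Disjoint c.support z.support → Disjoint c.support y.support →
    Disjoint z.support y.support → (∀ n, |c n| ≤ 1) → (∀ n, |z n| ≤ 1) →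
    z.support.card ≤ (y.support.filter fun n => |y n| = 1).card →
    ‖vec e c + vec e z‖ ≤ C * ‖vec e c + vec e y‖

section Aux
open Finset
variable {X : Type*} [NormedAddCommGroup X] [NormedSpace ℝ X]

lemma convex_bound (v u : X) (θ : ℝ) (h0 : 0 ≤ θ) (h1 : θ ≤ 1) :
    ‖v + θ • u‖ ≤ max ‖v‖ ‖v + u‖ := by
  have hv : v + θ • u = (1 - θ) • v + θ • (v + u) := by
    rw [smul_add, sub_smul, one_smul]; abel
  rw [hv]
  calc ‖(1 - θ) • v + θ • (v + u)‖ ≤ ‖(1 - θ) • v‖ + ‖θ • (v + u)‖ := norm_add_le _ _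
    _ = (1 - θ) * ‖v‖ + θ * ‖v + u‖ := by
        rw [norm_smul, norm_smul, Real.norm_of_nonneg (by linarith), Real.norm_of_nonneg h0]
    _ ≤ (1 - θ) * max ‖v‖ ‖v + u‖ + θ * max ‖v‖ ‖v + u‖ := by
        exact add_le_add (mul_le_mul_of_nonneg_left (le_max_left _ _) (by linarith))
          (mul_le_mul_of_nonneg_left (le_max_right _ _) h0)
    _ = max ‖v‖ ‖v + u‖ := by ring

lemma cube (e : ℕ → X) (p g : ℕ → ℝ) (F : Finset ℕ) :
    ∀ (w : X), (∀ n ∈ F, ∃ θ : ℝ, 0 ≤ θ ∧ θ ≤ 1 ∧ g n = θ * p n) →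
    ∃ S ⊆ F, ‖w + ∑ n ∈ F, g n • e n‖ ≤ ‖w + ∑ n ∈ S, p n • e n‖ := by
  induction F using Finset.induction_on with
  | empty => exact fun w _ => ⟨∅, subset_rfl, by simp⟩
  | @insert a s ha ih =>
    intro w hθ
    obtain ⟨θ, hθ0, hθ1, hg⟩ := hθ a (mem_insert_self a s)
    rw [Finset.sum_insert ha]
    have key : ‖w + (g a • e a + ∑ n ∈ s, g n • e n)‖ ≤
        max ‖w + ∑ n ∈ s, g n • e n‖ ‖(w + p a • e a) + ∑ n ∈ s, g n • e n‖ := by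
      have hv : w + (g a • e a + ∑ n ∈ s, g n • e n)
          = (w + ∑ n ∈ s, g n • e n) + θ • (p a • e a) := by
        rw [hg, mul_smul]; abel
      have hv2 : (w + p a • e a) + ∑ n ∈ s, g n • e n
          = (w + ∑ n ∈ s, g n • e n) + p a • e a := by abel
      rw [hv, hv2]
      exact convex_bound _ _ θ hθ0 hθ1
    have hrest : ∀ n ∈ s, ∃ θ : ℝ, 0 ≤ θ ∧ θ ≤ 1 ∧ g n = θ * p n :=
      fun n hn => hθ n (mem_insert_of_mem hn)
    rcases le_total ‖(w + p a • e a) + ∑ n ∈ s, g n • e n‖ ‖w + ∑ n ∈ s, g n • e n‖ with hc | hc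
    · obtain ⟨S, hS, hb⟩ := ih w hrest
      exact ⟨S, hS.trans (subset_insert a s), le_trans (key.trans (by simp [hc])) hb⟩
    · obtain ⟨S, hS, hb⟩ := ih (w + p a • e a) hrest
      refine ⟨insert a S, insert_subset_insert a hS, ?_⟩
      have haS : a ∉ S := fun h => ha (hS h)
      rw [Finset.sum_insert haS]
      have : w + (p a • e a + ∑ n ∈ S, p n • e n) = (w + p a • e a) + ∑ n ∈ S, p n • e n := by abel
      rw [this]
      exact le_trans (key.trans (by simp [hc])) hb
private noncomputable def mkF (S : Finset ℕ) (c : ℕ → ℝ) : ℕ →₀ ℝ :=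
  Finsupp.onFinset S (fun n => if n ∈ S then c n else 0)
    (fun n h => by by_contra hn; simp [hn] at h)

private lemma mkF_apply (S : Finset ℕ) (c : ℕ → ℝ) (n : ℕ) :
    (mkF S c) n = if n ∈ S then c n else 0 := rfl

private lemma mkF_supp (S : Finset ℕ) (c : ℕ → ℝ) : (mkF S c).support ⊆ S :=
  Finsupp.support_onFinset_subset

private lemma vec_mkF (e : ℕ → X) (S : Finset ℕ) (c : ℕ → ℝ) :
    vec e (mkF S c) = ∑ n ∈ S, c n • e n := by
  rw [vec]
  rw [Finset.sum_subset (mkF_supp S c) (fun n _ hn => by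
    rw [Finsupp.notMem_support_iff.mp hn, zero_smul])]
  exact Finset.sum_congr rfl (fun n hn => by simp [mkF_apply, hn])

lemma Qstar_sets (e : ℕ → X) (C : ℝ) (hQ : PropQstar e C)
    (S T U : Finset ℕ) (c z y : ℕ → ℝ)
    (hST : Disjoint S T) (hSU : Disjoint S U) (hTU : Disjoint T U)
    (hc : ∀ n ∈ S, |c n| ≤ 1) (hz : ∀ n ∈ T, |z n| ≤ 1)
    (hcard : T.card ≤ (U.filter fun n => |y n| = 1).card) :
    ‖∑ n ∈ S, c n • e n + ∑ n ∈ T, z n • e n‖ ≤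
      C * ‖∑ n ∈ S, c n • e n + ∑ n ∈ U, y n • e n‖ := by
  have hc' : ∀ n, |(mkF S c) n| ≤ 1 := by
    intro n
    by_cases hn : n ∈ S
    · simpa [mkF_apply, hn] using hc n hn
    · simp [mkF_apply, hn]
  have hz' : ∀ n, |(mkF T z) n| ≤ 1 := by
    intro n
    by_cases hn : n ∈ T
    · simpa [mkF_apply, hn] using hz n hn
    · simp [mkF_apply, hn]
  have hcard' : (mkF T z).support.card ≤
      ((mkF U y).support.filter fun n => |(mkF U y) n| = 1).card := by
    refine le_trans (le_trans (Finset.card_le_card (mkF_supp T z)) hcard)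
      (Finset.card_le_card ?_)
    intro n hn
    rw [Finset.mem_filter] at hn ⊢
    obtain ⟨hnU, hy1⟩ := hn
    have hval : (mkF U y) n = y n := by simp [mkF_apply, hnU]
    refine ⟨Finsupp.mem_support_iff.mpr ?_, by rw [hval]; exact hy1⟩
    rw [hval]; intro h; rw [h] at hy1; simp at hy1
  have := hQ (mkF S c) (mkF T z) (mkF U y)
    (hST.mono (mkF_supp S c) (mkF_supp T z))
    (hSU.mono (mkF_supp S c) (mkF_supp U y))
    (hTU.mono (mkF_supp T z) (mkF_supp U y)) hc' hz' hcard'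
  rwa [vec_mkF, vec_mkF, vec_mkF] at this

lemma suppression (e : ℕ → X) (C : ℝ) (hQ : PropQstar e C)
    (g : ℕ → ℝ) (S F : Finset ℕ) (hSF : S ⊆ F) :
    ‖∑ n ∈ S, g n • e n‖ ≤ C * ‖∑ n ∈ F, g n • e n‖ := by
  set M : ℝ := 1 + ∑ n ∈ F, |g n| with hM
  have hMpos : 0 < M := by
    have : (0:ℝ) ≤ ∑ n ∈ F, |g n| := Finset.sum_nonneg (fun n _ => abs_nonneg _)
    linarith
  have hbound : ∀ n ∈ F, |g n| ≤ M := by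
    intro n hn
    have := Finset.single_le_sum (f := fun n => |g n|) (fun i _ => abs_nonneg _) hn
    linarith
  have key := Qstar_sets e C hQ S ∅ (F \ S) (fun n => g n / M) 0 (fun n => g n / M)
    (Finset.disjoint_empty_right S) (Finset.disjoint_sdiff) (Finset.disjoint_left.mpr (fun n hn => absurd hn (Finset.notMem_empty n)))
    (fun n hn => by
      rw [abs_div, abs_of_pos hMpos, div_le_one hMpos]
      exact hbound n (hSF hn))
    (fun n hn => absurd hn (Finset.notMem_empty n))
    (by simp)
  simp only [Pi.zero_apply, zero_smul, Finset.sum_const_zero, add_zero] at key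
  have hsplit : ∑ n ∈ S, (g n / M) • e n + ∑ n ∈ F \ S, (g n / M) • e n
      = ∑ n ∈ F, (g n / M) • e n := by
    rw [add_comm, Finset.sum_sdiff hSF]
  rw [hsplit] at key
  have hscale : ∀ (G : Finset ℕ), ∑ n ∈ G, (g n / M) • e n = M⁻¹ • ∑ n ∈ G, g n • e n := by
    intro G
    rw [Finset.smul_sum]
    exact Finset.sum_congr rfl (fun n _ => by rw [div_eq_inv_mul, mul_smul])
  rw [hscale, hscale, norm_smul, norm_smul, Real.norm_eq_abs,
    abs_of_pos (inv_pos.mpr hMpos)] at key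
  have h2 : M⁻¹ * ‖∑ n ∈ S, g n • e n‖ ≤ M⁻¹ * (C * ‖∑ n ∈ F, g n • e n‖) := by
    calc M⁻¹ * ‖∑ n ∈ S, g n • e n‖ ≤ C * (M⁻¹ * ‖∑ n ∈ F, g n • e n‖) := key
      _ = M⁻¹ * (C * ‖∑ n ∈ F, g n • e n‖) := by ring
  exact le_of_mul_le_mul_left (by linarith [h2]) (inv_pos.mpr hMpos) |>.trans (le_refl _)
lemma core (e : ℕ → X) (C : ℝ) (hQ : PropQstar e C) (hC1 : 1 ≤ C)
    (a l : ℕ → ℝ) (G A Λ : Finset ℕ)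
    (hG : ∀ n ∉ G, a n = 0) (hl : ∀ n ∉ A, l n = 0)
    (hAΛ : A.card = Λ.card) (hΛG : Λ ⊆ G)
    (hgr : ∀ n ∈ Λ, ∀ k ∉ Λ, |a k| ≤ |a n|) :
    ‖∑ n ∈ G \ Λ, a n • e n‖ ≤ C ^ 2 * ‖∑ n ∈ G ∪ A, (a n - l n) • e n‖ := by
  rcases Finset.eq_empty_or_nonempty Λ with hΛe | hΛne
  · subst hΛe
    have hA : A = ∅ := Finset.card_eq_zero.mp (by simpa using hAΛ)
    subst hA
    simp only [Finset.sdiff_empty, Finset.union_empty]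
    have hcongr : ∀ n ∈ G, (a n - l n) • e n = a n • e n := fun n _ => by
      rw [hl n (Finset.notMem_empty n), sub_zero]
    rw [Finset.sum_congr rfl hcongr]
    have h1 : 1 ≤ C ^ 2 := by nlinarith
    exact le_mul_of_one_le_left (norm_nonneg _) h1
  · set t := Λ.inf' hΛne (fun n => |a n|) with htdef
    have ht_le : ∀ n ∈ Λ, t ≤ |a n| := fun n hn => Finset.inf'_le _ hn
    have hout : ∀ k ∉ Λ, |a k| ≤ t := fun k hk => Finset.le_inf' _ _ (fun n hn => hgr n hn k hk)
    rcases le_or_gt t 0 with ht0 | htpos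
    · have hz : ∀ n ∈ G \ Λ, a n • e n = 0 := fun n hn => by
        have hn' : n ∉ Λ := (Finset.mem_sdiff.mp hn).2
        have h1 : |a n| ≤ 0 := le_trans (hout n hn') ht0
        rw [abs_nonpos_iff.mp h1, zero_smul]
      rw [Finset.sum_eq_zero hz, norm_zero]
      positivity
    · -- main case
      set S := G \ (A ∪ Λ) with hSdef
      set T := A \ Λ with hTdef
      set U := Λ \ A with hUdef
      set ε : ℕ → ℝ := fun n => if 0 ≤ a n then 1 else -1 with hεdef
      have hεabs : ∀ n, |ε n| = 1 := fun n => by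
        by_cases h : 0 ≤ a n <;> simp [hεdef, h]
      have hSnΛ : ∀ n ∈ S, n ∉ Λ := fun n hn hm =>
        (Finset.mem_sdiff.mp hn).2 (Finset.mem_union_right _ hm)
      have hSnA : ∀ n ∈ S, n ∉ A := fun n hn hm =>
        (Finset.mem_sdiff.mp hn).2 (Finset.mem_union_left _ hm)
      have hTnΛ : ∀ n ∈ T, n ∉ Λ := fun n hn => (Finset.mem_sdiff.mp hn).2
      have hUΛ : ∀ n ∈ U, n ∈ Λ := fun n hn => (Finset.mem_sdiff.mp hn).1
      have hUnA : ∀ n ∈ U, n ∉ A := fun n hn => (Finset.mem_sdiff.mp hn).2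
      have hpS : ∀ n ∈ S, a n - l n = a n := fun n hn => by
        rw [hl n (hSnA n hn), sub_zero]
      have hpU : ∀ n ∈ U, a n - l n = a n := fun n hn => by
        rw [hl n (hUnA n hn), sub_zero]
      have hdST : Disjoint S T := Finset.disjoint_left.mpr fun n h1 h2 =>
        hSnA n h1 (Finset.mem_sdiff.mp h2).1
      have hdSU : Disjoint S U := Finset.disjoint_left.mpr fun n h1 h2 =>
        hSnΛ n h1 (hUΛ n h2)
      have hdTU : Disjoint T U := Finset.disjoint_left.mpr fun n h1 h2 =>
        hTnΛ n h1 (hUΛ n h2)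
      -- Step 1
      have step1 := Qstar_sets e C hQ S T U (fun n => (a n - l n) / t) (fun n => a n / t) ε
        hdST hdSU hdTU
        (fun n hn => by
          show |(a n - l n) / t| ≤ 1
          rw [hpS n hn, abs_div, abs_of_pos htpos, div_le_one htpos]
          exact hout n (hSnΛ n hn))
        (fun n hn => by
          show |a n / t| ≤ 1
          rw [abs_div, abs_of_pos htpos, div_le_one htpos]
          exact hout n (hTnΛ n hn))
        (by
          rw [Finset.filter_true_of_mem (fun n _ => hεabs n)]
          exact le_of_eq (Finset.card_sdiff_comm hAΛ))
      -- scaling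
      have hsc1 : ∀ (W : Finset ℕ) (q : ℕ → ℝ),
          ∑ n ∈ W, (q n / t) • e n = t⁻¹ • ∑ n ∈ W, q n • e n := fun W q => by
        rw [Finset.smul_sum]
        exact Finset.sum_congr rfl (fun n _ => by rw [div_eq_inv_mul, mul_smul])
      have hsc2 : ∑ n ∈ U, ε n • e n = t⁻¹ • ∑ n ∈ U, (t * ε n) • e n := by
        rw [Finset.smul_sum]
        refine Finset.sum_congr rfl (fun n _ => ?_)
        rw [← mul_smul]
        congr 1
        field_simp
      beta_reduce at step1
      rw [hsc1, hsc1, hsc2, ← smul_add, ← smul_add, norm_smul, norm_smul, Real.norm_eq_abs,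
        abs_of_pos (inv_pos.mpr htpos)] at step1
      set L := ∑ n ∈ S, (a n - l n) • e n + ∑ n ∈ T, a n • e n with hLdef
      set R := ∑ n ∈ S, (a n - l n) • e n + ∑ n ∈ U, (t * ε n) • e n with hRdef
      have hLR : ‖L‖ ≤ C * ‖R‖ := by
        have h2 := mul_le_mul_of_nonneg_left step1 htpos.le
        calc ‖L‖ = t * (t⁻¹ * ‖L‖) := by field_simp
          _ ≤ t * (C * (t⁻¹ * ‖R‖)) := h2
          _ = C * ‖R‖ := by
            field_simp
      -- LHS identification
      have hLHS : ∑ n ∈ G \ Λ, a n • e n = L := by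
        have hsub : G \ Λ ⊆ S ∪ T := by
          intro n hn
          obtain ⟨hnG, hnΛ⟩ := Finset.mem_sdiff.mp hn
          by_cases hA : n ∈ A
          · exact Finset.mem_union_right _ (Finset.mem_sdiff.mpr ⟨hA, hnΛ⟩)
          · exact Finset.mem_union_left _ (Finset.mem_sdiff.mpr ⟨hnG,
              fun hm => (Finset.mem_union.mp hm).elim hA hnΛ⟩)
        have h0 : ∑ n ∈ G \ Λ, a n • e n = ∑ n ∈ S ∪ T, a n • e n := by
          refine Finset.sum_subset hsub (fun n hn hn' => ?_)
          have hnΛ : n ∉ Λ := fun hm => by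
            rcases Finset.mem_union.mp hn with h | h
            exacts [hSnΛ n h hm, hTnΛ n h hm]
          have hnG : n ∉ G := fun hm => hn' (Finset.mem_sdiff.mpr ⟨hm, hnΛ⟩)
          rw [hG n hnG, zero_smul]
        rw [h0, Finset.sum_union hdST, hLdef]
        congr 1
        exact Finset.sum_congr rfl (fun n hn => by rw [hpS n hn])
      -- Step 2 : cube + suppression
      have hUG : U ⊆ G := fun n hn => hΛG (hUΛ n hn)
      have hSG : S ⊆ G := fun n hn => (Finset.mem_sdiff.mp hn).1
      set g : ℕ → ℝ := fun n => if n ∈ U then t * ε n else a n - l n with hgdef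
      have hR : R = ∑ n ∈ S ∪ U, g n • e n := by
        rw [Finset.sum_union hdSU, hRdef]
        congr 1
        · refine Finset.sum_congr rfl (fun n hn => ?_)
          have : g n = a n - l n := by
            simp only [hgdef]
            rw [if_neg (Finset.disjoint_left.mp hdSU hn)]
          rw [this]
        · refine Finset.sum_congr rfl (fun n hn => ?_)
          have : g n = t * ε n := by
            simp only [hgdef]
            rw [if_pos hn]
          rw [this]
      obtain ⟨S', hS'sub, hS'⟩ := cube e (fun n => a n - l n) g (S ∪ U) 0 (by
        intro n hn
        rcases Finset.mem_union.mp hn with hS | hU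
        · refine ⟨1, zero_le_one, le_refl 1, ?_⟩
          show g n = 1 * (a n - l n)
          simp only [hgdef]
          rw [if_neg (Finset.disjoint_left.mp hdSU hS), one_mul]
        · have hnΛ := hUΛ n hU
          have hta : t ≤ |a n| := ht_le n hnΛ
          have hapos : 0 < |a n| := lt_of_lt_of_le htpos hta
          have hane : a n ≠ 0 := fun h => by rw [h, abs_zero] at hapos; linarith
          refine ⟨t / |a n|, le_of_lt (div_pos htpos hapos),
            (div_le_one hapos).mpr hta, ?_⟩
          show g n = t / |a n| * (a n - l n)
          have hgn : g n = t * ε n := by simp only [hgdef]; rw [if_pos hU]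
          rw [hgn, hpU n hU]
          rcases le_or_gt 0 (a n) with hs | hs
          · have hε : ε n = 1 := by simp only [hεdef]; rw [if_pos hs]
            rw [hε, abs_of_nonneg hs, mul_one]
            field_simp
          · have hε : ε n = -1 := by simp only [hεdef]; rw [if_neg (not_le.mpr hs)]
            rw [hε, abs_of_neg hs]
            field_simp)
      rw [zero_add, zero_add] at hS'
      have hsupp := suppression e C hQ (fun n => a n - l n) S' (G ∪ A)
        (hS'sub.trans (Finset.union_subset (hSG.trans Finset.subset_union_left)
          (hUG.trans Finset.subset_union_left)))
      -- chain
      calc ‖∑ n ∈ G \ Λ, a n • e n‖ = ‖L‖ := by rw [hLHS]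
        _ ≤ C * ‖R‖ := hLR
        _ = C * ‖∑ n ∈ S ∪ U, g n • e n‖ := by rw [hR]
        _ ≤ C * ‖∑ n ∈ S', (a n - l n) • e n‖ := by
            have hC0 : (0:ℝ) ≤ C := le_trans zero_le_one hC1
            exact mul_le_mul_of_nonneg_left hS' hC0
        _ ≤ C * (C * ‖∑ n ∈ G ∪ A, (a n - l n) • e n‖) := by
            have hC0 : (0:ℝ) ≤ C := le_trans zero_le_one hC1
            exact mul_le_mul_of_nonneg_left hsupp hC0
        _ = C ^ 2 * ‖∑ n ∈ G ∪ A, (a n - l n) • e n‖ := by ring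
end Aux

/-- Theorem 3.6 (ii): if the basis has Property (Q*) with constant `C`, then it is
`C²`-greedy: `‖x - G_m(x)‖ ≤ C² σ_m(x)` for all `x` and `m`, where
`σ_m(x) = inf {‖x - b‖ : b ∈ span{e_n : n ∈ A}, |A| = m}`. -/
theorem stmt_18 {X : Type*} [NormedAddCommGroup X] [NormedSpace ℝ X] [CompleteSpace X]
    (e : ℕ → X) (f : ℕ → X →L[ℝ] ℝ)
    (hbi : ∀ m n : ℕ, f m (e n) = if m = n then 1 else 0)
    (hexp : ∀ z : X, Tendsto (fun N => ∑ n ∈ Finset.range N, f n z • e n) atTop (nhds z))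
    (C : ℝ) (hQ : PropQstar e C) :
    ∀ (x : X) (m : ℕ) (Λ : Finset ℕ), Λ.card = m → IsGreedySet f x Λ →
      ‖x - ∑ n ∈ Λ, f n x • e n‖ ≤
        C ^ 2 * sInf {d : ℝ | ∃ (A : Finset ℕ) (b : X), A.card = m ∧
          b ∈ Submodule.span ℝ (e '' (A : Set ℕ)) ∧ d = ‖x - b‖} := by
  -- `C ≥ 1`
  classical
  have he0 : e 0 ≠ 0 := by
    intro h
    have h00 := hbi 0 0
    rw [h] at h00
    simp at h00
  have hC1 : 1 ≤ C := by
    have hv : vec e (Finsupp.single 0 (1:ℝ)) = e 0 := by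
      rw [vec, Finsupp.support_single_ne_zero _ one_ne_zero]
      simp
    have hv0 : vec e (0 : ℕ →₀ ℝ) = 0 := by simp [vec]
    have h1 := hQ (Finsupp.single 0 (1:ℝ)) 0 0 (by simp) (by simp) (by simp)
      (fun n => by
        rcases eq_or_ne n 0 with rfl | hn
        · simp
        · simp [Finsupp.single_apply, (Ne.symm hn)])
      (fun n => by simp) (by simp)
    rw [hv, hv0, add_zero] at h1
    have hne : 0 < ‖e 0‖ := norm_pos_iff.mpr he0
    nlinarith
  have hC2 : (0:ℝ) < C ^ 2 := by nlinarith
  intro x m Λ hcardΛ hgr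
  have hnonempty : Set.Nonempty {d : ℝ | ∃ (A : Finset ℕ) (b : X), A.card = m ∧
      b ∈ Submodule.span ℝ (e '' (A : Set ℕ)) ∧ d = ‖x - b‖} :=
    ⟨‖x‖, Finset.range m, 0, Finset.card_range m, Submodule.zero_mem _, by rw [sub_zero]⟩
  have key : ∀ d ∈ {d : ℝ | ∃ (A : Finset ℕ) (b : X), A.card = m ∧
      b ∈ Submodule.span ℝ (e '' (A : Set ℕ)) ∧ d = ‖x - b‖},
      ‖x - ∑ n ∈ Λ, f n x • e n‖ / C ^ 2 ≤ d := by
    rintro d ⟨A, b, hAcard, hb, rfl⟩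
    rw [div_le_iff₀ hC2]
    obtain ⟨l, hlsupp, hlval⟩ := (Finsupp.mem_span_image_iff_linearCombination ℝ).mp hb
    have hl0 : ∀ n ∉ A, l n = 0 := fun n hn =>
      (Finsupp.mem_supported' ℝ l).mp hlsupp n (by simpa using hn)
    have hbsum : b = ∑ n ∈ A, l n • e n := by
      rw [← hlval, Finsupp.linearCombination_apply, Finsupp.sum]
      refine Finset.sum_subset ?_ ?_
      · intro n hn
        by_contra h
        exact Finsupp.mem_support_iff.mp hn (hl0 n h)
      · intro n _ hn
        rw [Finsupp.notMem_support_iff.mp hn, zero_smul]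
    have hev : ∀ N ≥ Λ.sup id + 1,
        ‖(∑ n ∈ Finset.range N, f n x • e n) - ∑ n ∈ Λ, f n x • e n‖
          ≤ C ^ 2 * ‖(∑ n ∈ Finset.range N, f n x • e n) - b‖ := by
      intro N hN
      have hΛsub : Λ ⊆ Finset.range N := by
        intro k hk
        rw [Finset.mem_range]
        have : k ≤ Λ.sup id := Finset.le_sup (f := id) hk
        omega
      set a : ℕ → ℝ := fun n => if n ∈ Finset.range N then f n x else 0 with hadef
      have hGa : ∀ n ∉ Finset.range N, a n = 0 := fun n hn => by
        simp only [hadef]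
        rw [if_neg hn]
      have hAcard' : A.card = Λ.card := by rw [hAcard, hcardΛ]
      have hgr' : ∀ n ∈ Λ, ∀ k ∉ Λ, |a k| ≤ |a n| := by
        intro n hn k hk
        have han : a n = f n x := by simp only [hadef]; rw [if_pos (hΛsub hn)]
        rw [han]
        by_cases hkN : k ∈ Finset.range N
        · have hak : a k = f k x := by simp only [hadef]; rw [if_pos hkN]
          rw [hak]
          rcases hgr n hn k hk with h | ⟨h, _⟩
          exacts [le_of_lt h, le_of_eq h]
        · rw [hGa k hkN, abs_zero]
          exact abs_nonneg _
      have hcore := core e C hQ hC1 a l (Finset.range N) A Λ hGa hl0 hAcard' hΛsub hgr'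
      have hxn : ∑ n ∈ Finset.range N, f n x • e n = ∑ n ∈ Finset.range N, a n • e n :=
        Finset.sum_congr rfl (fun n hn => by simp only [hadef]; rw [if_pos hn])
      have hPl : ∑ n ∈ Λ, f n x • e n = ∑ n ∈ Λ, a n • e n :=
        Finset.sum_congr rfl (fun n hn => by simp only [hadef]; rw [if_pos (hΛsub hn)])
      have hLeq : (∑ n ∈ Finset.range N, f n x • e n) - ∑ n ∈ Λ, f n x • e n
          = ∑ n ∈ Finset.range N \ Λ, a n • e n := by
        rw [hxn, hPl, ← Finset.sum_sdiff hΛsub, add_sub_cancel_right]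
      have h1 : ∑ n ∈ Finset.range N ∪ A, (a n - l n) • e n
          = ∑ n ∈ Finset.range N ∪ A, a n • e n - ∑ n ∈ Finset.range N ∪ A, l n • e n := by
        rw [← Finset.sum_sub_distrib]
        exact Finset.sum_congr rfl (fun n _ => sub_smul _ _ _)
      have h2 : ∑ n ∈ Finset.range N ∪ A, a n • e n = ∑ n ∈ Finset.range N, a n • e n :=
        (Finset.sum_subset Finset.subset_union_left
          (fun n _ hn => by rw [hGa n hn, zero_smul])).symm
      have h3 : ∑ n ∈ Finset.range N ∪ A, l n • e n = ∑ n ∈ A, l n • e n :=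
        (Finset.sum_subset Finset.subset_union_right
          (fun n _ hn => by rw [hl0 n hn, zero_smul])).symm
      have hReq : (∑ n ∈ Finset.range N, f n x • e n) - b
          = ∑ n ∈ Finset.range N ∪ A, (a n - l n) • e n := by
        rw [h1, h2, h3, hxn, hbsum]
      rw [hLeq, hReq]
      exact hcore
    have ht1 : Tendsto (fun N => ‖(∑ n ∈ Finset.range N, f n x • e n)
        - ∑ n ∈ Λ, f n x • e n‖) atTop (nhds ‖x - ∑ n ∈ Λ, f n x • e n‖) :=
      (Tendsto.sub (hexp x) tendsto_const_nhds).norm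
    have ht2 : Tendsto (fun N => C ^ 2 * ‖(∑ n ∈ Finset.range N, f n x • e n) - b‖)
        atTop (nhds (C ^ 2 * ‖x - b‖)) :=
      tendsto_const_nhds.mul ((Tendsto.sub (hexp x) tendsto_const_nhds).norm)
    have hle := le_of_tendsto_of_tendsto ht1 ht2 (eventually_atTop.mpr ⟨Λ.sup id + 1, hev⟩)
    calc ‖x - ∑ n ∈ Λ, f n x • e n‖ ≤ C ^ 2 * ‖x - b‖ := hle
      _ = ‖x - b‖ * C ^ 2 := mul_comm _ _
  have hlow := le_csInf hnonempty key
  rw [div_le_iff₀ hC2] at hlow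
  calc ‖x - ∑ n ∈ Λ, f n x • e n‖ ≤ _ * C ^ 2 := hlow
    _ = C ^ 2 * _ := mul_comm _ _
end

section
/- If a Schauder basis B of a Banach space X satisfies ‖x − G_m(x)‖ ≤ C·D*_m(x) for all x and m, then B has Property (Q*) with constant C. -/
open Filter

/- Theorem 3.6 (i): if `‖x - G_m(x)‖ ≤ C D*_m(x)` for all `x` and `m`, then the basis has
Property (Q*) with constant `C`.

Convexity reduction: if the bound holds for all sign patterns on `A`, it holds for
any coefficients bounded by 1 in modulus. -/
lemma sign_vec_bound {X : Type*} [NormedAddCommGroup X] [NormedSpace ℝ X]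
    (e : ℕ → X) (M : ℝ) :
    ∀ (A : Finset ℕ) (w : X) (z : ℕ → ℝ), (∀ n ∈ A, |z n| ≤ 1) →
      (∀ ε : ℕ → ℝ, (∀ n ∈ A, ε n = 1 ∨ ε n = -1) →
        ‖w + ∑ n ∈ A, ε n • e n‖ ≤ M) →
      ‖w + ∑ n ∈ A, z n • e n‖ ≤ M := by
  intro A
  induction A using Finset.induction_on with
  | empty =>
      intro w z _ h
      simpa using h (fun _ => 1) (by simp)
  | @insert a s ha ih =>
      intro w z hz hs
      have hza : |z a| ≤ 1 := hz a (Finset.mem_insert_self a s)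
      have hza1 : -1 ≤ z a := (abs_le.mp hza).1
      have hza2 : z a ≤ 1 := (abs_le.mp hza).2
      have hsign : ∀ b : ℝ, b = 1 ∨ b = -1 →
          ‖(w + b • e a) + ∑ n ∈ s, z n • e n‖ ≤ M := by
        intro b hb
        refine ih (w + b • e a) z (fun n hn => hz n (Finset.mem_insert_of_mem hn)) ?_
        intro ε hε
        have h2 := hs (fun n => if n = a then b else ε n)
          (by
            intro n hn
            rcases Finset.mem_insert.mp hn with rfl | hn
            · simp [hb]
            · have : n ≠ a := fun h => ha (h ▸ hn)
              simp [this, hε n hn])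
        rw [Finset.sum_insert ha] at h2
        simp only [if_pos rfl] at h2
        have h3 : ∑ n ∈ s, (if n = a then b else ε n) • e n = ∑ n ∈ s, ε n • e n := by
          refine Finset.sum_congr rfl fun n hn => ?_
          have : n ≠ a := fun h => ha (h ▸ hn)
          simp [this]
        rw [h3] at h2
        calc ‖(w + b • e a) + ∑ n ∈ s, ε n • e n‖
            = ‖w + (b • e a + ∑ n ∈ s, ε n • e n)‖ := by rw [add_assoc]
          _ ≤ M := h2
      have h1 : ‖(w + (1:ℝ) • e a) + ∑ n ∈ s, z n • e n‖ ≤ M := hsign 1 (Or.inl rfl)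
      have h2 : ‖(w + (-1:ℝ) • e a) + ∑ n ∈ s, z n • e n‖ ≤ M := hsign (-1) (Or.inr rfl)
      rw [Finset.sum_insert ha]
      have hdecomp : w + (z a • e a + ∑ n ∈ s, z n • e n) =
          ((1 + z a)/2) • ((w + (1:ℝ) • e a) + ∑ n ∈ s, z n • e n) +
          ((1 - z a)/2) • ((w + (-1:ℝ) • e a) + ∑ n ∈ s, z n • e n) := by
        module
      rw [hdecomp]
      have c1 : (0:ℝ) ≤ (1 + z a)/2 := by linarith
      have c2 : (0:ℝ) ≤ (1 - z a)/2 := by linarith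
      calc ‖((1 + z a)/2) • ((w + (1:ℝ) • e a) + ∑ n ∈ s, z n • e n) +
            ((1 - z a)/2) • ((w + (-1:ℝ) • e a) + ∑ n ∈ s, z n • e n)‖
          ≤ ((1 + z a)/2) * ‖(w + (1:ℝ) • e a) + ∑ n ∈ s, z n • e n‖ +
            ((1 - z a)/2) * ‖(w + (-1:ℝ) • e a) + ∑ n ∈ s, z n • e n‖ := by
            refine (norm_add_le _ _).trans ?_
            rw [norm_smul, norm_smul, Real.norm_eq_abs, Real.norm_eq_abs,
              abs_of_nonneg c1, abs_of_nonneg c2]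
          _ ≤ ((1 + z a)/2) * M + ((1 - z a)/2) * M := by
            gcongr
          _ = M := by ring

lemma ext_sum {X : Type*} [NormedAddCommGroup X] [NormedSpace ℝ X]
    (e : ℕ → X) {T S : Finset ℕ} (hTS : T ⊆ S) (g : ℕ → ℝ) :
    ∑ n ∈ T, g n • e n = ∑ n ∈ S, (if n ∈ T then g n else 0) • e n := by
  rw [← Finset.sum_subset hTS (fun x _ hx => by rw [if_neg hx, zero_smul])]
  exact Finset.sum_congr rfl fun n hn => by rw [if_pos hn]

/-- Core estimate: for a sign pattern `ε` on `z.support` and any `δ > 0`. -/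
lemma core_s19 {X : Type*} [NormedAddCommGroup X] [NormedSpace ℝ X]
    (e : ℕ → X) (f : ℕ → X →L[ℝ] ℝ)
    (hbi : ∀ m n : ℕ, f m (e n) = if m = n then 1 else 0)
    (C : ℝ) (hC0 : 0 ≤ C)
    (hG : ∀ (x : X) (m : ℕ) (Λ : Finset ℕ), Λ.card = m → IsGreedySet f x Λ →
      ‖x - ∑ n ∈ Λ, f n x • e n‖ ≤
        C * sInf {d : ℝ | ∃ (A : Finset ℕ) (ε : ℕ → ℝ) (α : ℝ), A.card = m ∧
          (∀ n ∈ A, ε n = 1 ∨ ε n = -1) ∧ d = ‖x - α • ∑ n ∈ A, ε n • e n‖})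
    (c y : ℕ →₀ ℝ) (Z : Finset ℕ)
    (hdcz : Disjoint c.support Z) (hdcy : Disjoint c.support y.support)
    (hdzy : Disjoint Z y.support) (hc : ∀ n, |c n| ≤ 1)
    (B : Finset ℕ) (hBF : B ⊆ y.support) (hB1 : ∀ n ∈ B, |y n| = 1)
    (hBcard : B.card = Z.card)
    (ε : ℕ → ℝ) (hε : ∀ n ∈ Z, ε n = 1 ∨ ε n = -1)
    (δ : ℝ) (hδ : 0 < δ) :
    ‖vec e c + ∑ n ∈ Z, ε n • e n‖ ≤
      C * ‖vec e c + vec e y‖ + δ * (C * ‖∑ n ∈ B, (if 0 ≤ y n then (1:ℝ) else -1) • e n‖) := by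
  classical
  set η : ℕ → ℝ := fun n => if 0 ≤ y n then (1:ℝ) else -1 with hηdef
  have hη1 : ∀ n, η n = 1 ∨ η n = -1 := by
    intro n; by_cases h : 0 ≤ y n <;> simp [hηdef, h]
  have hηabs : ∀ n, |η n| = 1 := by
    intro n; rcases hη1 n with h | h <;> rw [h] <;> norm_num
  have hyB : ∀ n ∈ B, y n = η n := by
    intro n hn
    have h1 := hB1 n hn
    by_cases h : 0 ≤ y n
    · simp only [hηdef, if_pos h]; rw [abs_of_nonneg h] at h1; exact h1
    · simp only [hηdef, if_neg h]
      push_neg at h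
      rw [abs_of_neg h] at h1; linarith
  have hyη : ∀ n ∈ y.support, |y n + η n| = |y n| + 1 := by
    intro n hn
    by_cases h : 0 ≤ y n
    · simp only [hηdef, if_pos h]
      rw [abs_of_nonneg h, abs_of_nonneg (by linarith)]
    · push_neg at h
      simp only [hηdef, if_neg (not_le.mpr h)]
      rw [abs_of_neg h, abs_of_neg (by linarith)]
      ring
  set S : Finset ℕ := c.support ∪ Z ∪ y.support with hSdef
  set d : ℕ → ℝ := fun n =>
    if n ∈ c.support then c n else if n ∈ Z then ε n
    else if n ∈ y.support then (if n ∈ B then (1+δ) * η n else y n + η n) else 0 with hddef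
  set v : X := ∑ n ∈ S, d n • e n with hvdef
  -- coefficient functional values
  have hfv : ∀ k, f k v = if k ∈ S then d k else 0 := by
    intro k
    rw [hvdef, map_sum]
    rw [Finset.sum_congr rfl (fun n _ => ?_), Finset.sum_ite_eq S k d]
    rw [map_smul, hbi k n, smul_eq_mul, mul_ite, mul_one, mul_zero]
  -- membership facts
  have hFS : y.support ⊆ S := by
    intro n hn; simp only [hSdef, Finset.mem_union]; tauto
  have hZS : Z ⊆ S := by
    intro n hn; simp only [hSdef, Finset.mem_union]; tauto
  have hcS : c.support ⊆ S := by
    intro n hn; simp only [hSdef, Finset.mem_union]; tauto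
  -- coefficient bounds
  have hdF : ∀ n ∈ y.support, 1 < |d n| := by
    intro n hn
    have h1 : n ∉ c.support := Finset.disjoint_right.mp hdcy hn
    have h2 : n ∉ Z := Finset.disjoint_right.mp hdzy hn
    simp only [hddef, if_neg h1, if_neg h2, if_pos hn]
    by_cases hB : n ∈ B
    · rw [if_pos hB, abs_mul, hηabs, mul_one, abs_of_pos (by linarith)]
      linarith
    · rw [if_neg hB, hyη n hn]
      have hy0 : y n ≠ 0 := Finsupp.mem_support_iff.mp hn
      have := abs_pos.mpr hy0
      linarith
  have hdout : ∀ k ∉ y.support, |d k| ≤ 1 := by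
    intro k hk
    by_cases h1 : k ∈ c.support
    · simp only [hddef, if_pos h1]; exact hc k
    · by_cases h2 : k ∈ Z
      · simp only [hddef, if_neg h1, if_pos h2]
        rcases hε k h2 with h | h <;> rw [h] <;> norm_num
      · simp only [hddef, if_neg h1, if_neg h2, if_neg hk]
        norm_num
  -- greedy set
  have hgr : IsGreedySet f v y.support := by
    intro n hn k hk
    left
    rw [hfv, hfv, if_pos (hFS hn)]
    by_cases hkS : k ∈ S
    · rw [if_pos hkS]
      exact lt_of_le_of_lt (hdout k hk) (hdF n hn)
    · rw [if_neg hkS, abs_zero]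
      linarith [hdF n hn]
  have happ := hG v y.support.card y.support rfl hgr
  -- rewrite LHS
  have hdisjF : Disjoint (c.support ∪ Z) y.support :=
    Finset.disjoint_union_left.mpr ⟨hdcy, hdzy⟩
  have hvsplit : v = (∑ n ∈ c.support ∪ Z, d n • e n) + ∑ n ∈ y.support, d n • e n := by
    rw [hvdef, hSdef, Finset.sum_union hdisjF]
  have hL : v - ∑ n ∈ y.support, f n v • e n = vec e c + ∑ n ∈ Z, ε n • e n := by
    have h1 : ∑ n ∈ y.support, f n v • e n = ∑ n ∈ y.support, d n • e n :=
      Finset.sum_congr rfl fun n hn => by rw [hfv, if_pos (hFS hn)]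
    rw [h1, hvsplit, add_sub_cancel_right, Finset.sum_union hdcz]
    congr 1
    · refine Finset.sum_congr rfl fun n hn => ?_
      rw [hddef]; simp only [if_pos hn]
    · refine Finset.sum_congr rfl fun n hn => ?_
      have h1 : n ∉ c.support := Finset.disjoint_right.mp hdcz hn
      rw [hddef]; simp only [if_neg h1, if_pos hn]
  rw [hL] at happ
  -- the D* competitor
  set A2 : Finset ℕ := Z ∪ (y.support \ B) with hA2def
  set ε2 : ℕ → ℝ := fun n => if n ∈ Z then ε n else η n with hε2def
  have hdisj2 : Disjoint Z (y.support \ B) :=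
    hdzy.mono_right (Finset.sdiff_subset)
  have hA2card : A2.card = y.support.card := by
    rw [hA2def, Finset.card_union_of_disjoint hdisj2, Finset.card_sdiff_of_subset hBF]
    have := Finset.card_le_card hBF
    omega
  have hA2S : A2 ⊆ S := by
    intro n hn
    rcases Finset.mem_union.mp hn with h | h
    · exact hZS h
    · exact hFS (Finset.mem_sdiff.mp h).1
  have hε2sign : ∀ n ∈ A2, ε2 n = 1 ∨ ε2 n = -1 := by
    intro n hn
    rw [hε2def]
    by_cases h : n ∈ Z
    · simp only [if_pos h]; exact hε n h
    · simp only [if_neg h]; exact hη1 n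
  -- compute v - ∑_{A2} ε2 n • e n
  have hsum2 : ∑ n ∈ A2, ε2 n • e n = ∑ n ∈ S, (if n ∈ A2 then ε2 n else 0) • e n :=
    ext_sum e hA2S ε2
  have hveq : v - ∑ n ∈ A2, ε2 n • e n =
      vec e c + vec e y + δ • ∑ n ∈ B, η n • e n := by
    rw [hsum2, hvdef, ← Finset.sum_sub_distrib]
    simp only [← sub_smul]
    have hrhs : vec e c + vec e y + δ • ∑ n ∈ B, η n • e n =
        ∑ n ∈ S, ((if n ∈ c.support then c n else 0) + (if n ∈ y.support then y n else 0)
          + (if n ∈ B then δ * η n else 0)) • e n := by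
      simp only [add_smul]
      rw [Finset.sum_add_distrib, Finset.sum_add_distrib]
      congr 1
      · congr 1
        · rw [vec]
          exact ext_sum e hcS c
        · rw [vec]
          exact ext_sum e hFS y
      · rw [Finset.smul_sum]
        simp only [smul_smul, smul_eq_mul]
        exact ext_sum e (hBF.trans hFS) (fun n => δ * η n)
    rw [hrhs]
    refine Finset.sum_congr rfl fun n hn => ?_
    congr 1
    by_cases h1 : n ∈ c.support
    · have h2 : n ∉ Z := Finset.disjoint_left.mp hdcz h1
      have h3 : n ∉ y.support := Finset.disjoint_left.mp hdcy h1
      have h4 : n ∉ B := fun h => h3 (hBF h)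
      have h5 : n ∉ A2 := by
        rw [hA2def, Finset.mem_union]
        push_neg
        exact ⟨h2, fun h => h3 (Finset.mem_sdiff.mp h).1⟩
      simp only [hddef, if_pos h1, if_neg h5, if_neg h3, if_neg h4]
      ring
    · by_cases h2 : n ∈ Z
      · have h3 : n ∉ y.support := Finset.disjoint_left.mp hdzy h2
        have h4 : n ∉ B := fun h => h3 (hBF h)
        have h5 : n ∈ A2 := Finset.mem_union_left _ h2
        simp only [hddef, hε2def, if_neg h1, if_pos h2, if_pos h5, if_neg h3, if_neg h4]
        ring
      · have h3 : n ∈ y.support := by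
          rw [hSdef] at hn
          simp only [Finset.mem_union] at hn
          tauto
        by_cases h4 : n ∈ B
        · have h5 : n ∉ A2 := by
            rw [hA2def, Finset.mem_union]
            push_neg
            exact ⟨h2, fun h => (Finset.mem_sdiff.mp h).2 h4⟩
          simp only [hddef, if_neg h1, if_neg h2, if_pos h3, if_pos h4, if_neg h5]
          rw [hyB n h4]
          ring
        · have h5 : n ∈ A2 :=
            Finset.mem_union_right _ (Finset.mem_sdiff.mpr ⟨h3, h4⟩)
          simp only [hddef, hε2def, if_neg h1, if_neg h2, if_pos h3, if_neg h4, if_pos h5]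
          ring
  -- bound the sInf from above
  have hbdd : BddBelow {d : ℝ | ∃ (A : Finset ℕ) (ε' : ℕ → ℝ) (α : ℝ),
      A.card = y.support.card ∧ (∀ n ∈ A, ε' n = 1 ∨ ε' n = -1) ∧
      d = ‖v - α • ∑ n ∈ A, ε' n • e n‖} := by
    refine ⟨0, fun x hx => ?_⟩
    obtain ⟨A, ε', α, -, -, rfl⟩ := hx
    exact norm_nonneg _
  have hmem : ‖v - (1:ℝ) • ∑ n ∈ A2, ε2 n • e n‖ ∈ {d : ℝ | ∃ (A : Finset ℕ) (ε' : ℕ → ℝ)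
      (α : ℝ), A.card = y.support.card ∧ (∀ n ∈ A, ε' n = 1 ∨ ε' n = -1) ∧
      d = ‖v - α • ∑ n ∈ A, ε' n • e n‖} :=
    ⟨A2, ε2, 1, hA2card, hε2sign, rfl⟩
  have hinf := csInf_le hbdd hmem
  have hnorm : ‖v - (1:ℝ) • ∑ n ∈ A2, ε2 n • e n‖ ≤
      ‖vec e c + vec e y‖ + δ * ‖∑ n ∈ B, η n • e n‖ := by
    rw [one_smul, hveq]
    refine (norm_add_le _ _).trans ?_
    rw [norm_smul, Real.norm_eq_abs, abs_of_pos hδ]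
  calc ‖vec e c + ∑ n ∈ Z, ε n • e n‖
      ≤ C * sInf {d : ℝ | ∃ (A : Finset ℕ) (ε' : ℕ → ℝ) (α : ℝ),
          A.card = y.support.card ∧ (∀ n ∈ A, ε' n = 1 ∨ ε' n = -1) ∧
          d = ‖v - α • ∑ n ∈ A, ε' n • e n‖} := happ
    _ ≤ C * ‖v - (1:ℝ) • ∑ n ∈ A2, ε2 n • e n‖ := by
        exact mul_le_mul_of_nonneg_left hinf hC0
    _ ≤ C * (‖vec e c + vec e y‖ + δ * ‖∑ n ∈ B, η n • e n‖) :=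
        mul_le_mul_of_nonneg_left hnorm hC0
    _ = C * ‖vec e c + vec e y‖ + δ * (C * ‖∑ n ∈ B, η n • e n‖) := by ring

/-- Theorem 3.6 (i): if `‖x - G_m(x)‖ ≤ C D*_m(x)` for all `x` and `m`, then the basis has
Property (Q*) with constant `C`. -/
theorem stmt_19 {X : Type*} [NormedAddCommGroup X] [NormedSpace ℝ X] [CompleteSpace X]
    (e : ℕ → X) (f : ℕ → X →L[ℝ] ℝ)
    (hbi : ∀ m n : ℕ, f m (e n) = if m = n then 1 else 0)
    (hexp : ∀ z : X, Tendsto (fun N => ∑ n ∈ Finset.range N, f n z • e n) atTop (nhds z))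
    (C : ℝ)
    (hG : ∀ (x : X) (m : ℕ) (Λ : Finset ℕ), Λ.card = m → IsGreedySet f x Λ →
      ‖x - ∑ n ∈ Λ, f n x • e n‖ ≤
        C * sInf {d : ℝ | ∃ (A : Finset ℕ) (ε : ℕ → ℝ) (α : ℝ), A.card = m ∧
          (∀ n ∈ A, ε n = 1 ∨ ε n = -1) ∧ d = ‖x - α • ∑ n ∈ A, ε n • e n‖}) :
    PropQstar e C := by
  classical
  -- first, `C ≥ 1 > 0`
  have he0 : e 0 ≠ 0 := by
    intro h
    have h1 := hbi 0 0
    rw [h] at h1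
    simp at h1
  have hC1 : 1 ≤ C := by
    have h0 := hG (e 0) 0 ∅ rfl (by intro n hn; simp at hn)
    simp only [Finset.sum_empty, sub_zero] at h0
    have hset : {d : ℝ | ∃ (A : Finset ℕ) (ε : ℕ → ℝ) (α : ℝ), A.card = 0 ∧
        (∀ n ∈ A, ε n = 1 ∨ ε n = -1) ∧ d = ‖e 0 - α • ∑ n ∈ A, ε n • e n‖} = {‖e 0‖} := by
      ext d
      simp only [Set.mem_setOf_eq, Set.mem_singleton_iff]
      constructor
      · rintro ⟨A, ε, α, hA, -, rfl⟩
        rw [Finset.card_eq_zero.mp hA]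
        simp
      · rintro rfl
        exact ⟨∅, fun _ => 1, 0, rfl, by simp, by simp⟩
    rw [hset, csInf_singleton] at h0
    have hpos : 0 < ‖e 0‖ := norm_pos_iff.mpr he0
    nlinarith
  have hC0 : 0 ≤ C := by linarith
  intro c z y hdcz hdcy hdzy hc hz hcard
  obtain ⟨B, hBsub, hBcard⟩ := Finset.exists_subset_card_eq
      (s := y.support.filter fun n => |y n| = 1) (n := z.support.card) hcard
  have hBF : B ⊆ y.support := hBsub.trans (Finset.filter_subset _ _)
  have hB1 : ∀ n ∈ B, |y n| = 1 := fun n hn => (Finset.mem_filter.mp (hBsub hn)).2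
  have main : ∀ ε : ℕ → ℝ, (∀ n ∈ z.support, ε n = 1 ∨ ε n = -1) →
      ‖vec e c + ∑ n ∈ z.support, ε n • e n‖ ≤ C * ‖vec e c + vec e y‖ := by
    intro ε hε
    set K : ℝ := C * ‖∑ n ∈ B, (if 0 ≤ y n then (1:ℝ) else -1) • e n‖ with hKdef
    have hK0 : 0 ≤ K := mul_nonneg hC0 (norm_nonneg _)
    refine le_of_forall_pos_le_add fun t ht => ?_
    have hδpos : 0 < t / (K + 1) := div_pos ht (by linarith)
    have h := core_s19 e f hbi C hC0 hG c y z.support hdcz hdcy hdzy hc B hBF hB1 hBcard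
      ε hε (t / (K + 1)) hδpos
    refine h.trans ?_
    have hle : t / (K + 1) * K ≤ t := by
      rw [div_mul_eq_mul_div, div_le_iff₀ (by linarith : (0:ℝ) < K + 1)]
      nlinarith
    rw [← hKdef]
    linarith
  have hfin := sign_vec_bound e (C * ‖vec e c + vec e y‖) z.support (vec e c)
    (fun n => z n) (fun n _ => hz n) main
  exact hfin
end
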